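/- arXiv:0908.2228 — 4 statements merged into one kernel-verified Lean document; each statement's English description precedes it below -/
import Mathlib

section
/- Let (X_n)_{n∈ω} be an increasing sequence of topological groups in which each X_n is a topological subgroup of X_{n+1}, each X_n is a SIN-group, and each X_n carries its two-sided uniformity (so that (X_n) is a tower of uniform spaces). Then the uniform direct limit u-lim X_n, with the group operations of X = ⋃_n X_n and the topology induced by the direct limit uniformity, is a topological group (multiplication and inversion are continuous). -/
open Set Filter Topology Pointwise

universe u

/-- The uniform direct limit uniformity of an increasing sequence of uniform subspaces of `G`:
the strongest (finest) uniformity on `G` making all inclusions uniformly continuous. -/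
noncomputable def uDirLim {G : Type u} (S : ℕ → Set G)
    (u : (n : ℕ) → UniformSpace (S n)) : UniformSpace G :=
  sInf {u' : UniformSpace G |
    ∀ n, @UniformContinuous _ _ (u n) u' (Subtype.val : S n → G)}

open Uniformity
open scoped SetRel

namespace Stmt10Aux

variable {G : Type u} [Group G]

/-- A "good" sequence: each `U n` is an open symmetric invariant neighborhood of `1` in `S n`. -/
def Good {S : ℕ → Subgroup G} (t : (n : ℕ) → TopologicalSpace (S n))
    (U : ∀ n, Set (S n)) : Prop :=
  ∀ n, @IsOpen _ (t n) (U n) ∧ (1 : S n) ∈ U n ∧ (U n)⁻¹ = U n ∧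
    ∀ g : S n, (fun x => g * x * g⁻¹) '' U n = U n

/-- The image of `U n` in the ambient group. -/
def img {S : ℕ → Subgroup G} (U : ∀ n, Set (S n)) (n : ℕ) : Set G :=
  Subtype.val '' U n

/-- Partial products `U 0 * U 1 * ⋯ * U n` in the ambient group. -/
def PP {S : ℕ → Subgroup G} (U : ∀ n, Set (S n)) : ℕ → Set G
  | 0 => img U 0
  | n + 1 => PP U n * img U (n + 1)

/-- The union of all partial products. -/
def NN {S : ℕ → Subgroup G} (U : ∀ n, Set (S n)) : Set G := ⋃ n, PP U n

/-- The left entourage associated to a good sequence. -/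
def EE {S : ℕ → Subgroup G} (U : ∀ n, Set (S n)) : Set (G × G) :=
  {p | p.2⁻¹ * p.1 ∈ NN U}

/-- A shrinking of a sequence: products of two elements of `U' n` lie in `U n`. -/
def Shr {S : ℕ → Subgroup G} (U' U : ∀ n, Set (S n)) : Prop :=
  ∀ n, ∀ a ∈ U' n, ∀ b ∈ U' n, a * b ∈ U n

section Basic

variable {S : ℕ → Subgroup G} {t : (n : ℕ) → TopologicalSpace (S n)}
  {U U' : ∀ n, Set (S n)}

theorem Good.one_mem_img (hU : Good t U) (n : ℕ) : (1 : G) ∈ img U n :=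
  ⟨1, (hU n).2.1, rfl⟩

theorem Good.inv_mem_img (hU : Good t U) {n : ℕ} {x : G} (hx : x ∈ img U n) :
    x⁻¹ ∈ img U n := by
  obtain ⟨a, ha, rfl⟩ := hx
  refine ⟨a⁻¹, ?_, by simp⟩
  have : a⁻¹ ∈ (U n)⁻¹ := by rw [Set.mem_inv]; simpa
  rwa [(hU n).2.2.1] at this

theorem Good.conj_mem_U (hU : Good t U) {n : ℕ} (g : S n) {a : S n} (ha : a ∈ U n) :
    g * a * g⁻¹ ∈ U n := by
  rw [← (hU n).2.2.2 g]
  exact Set.mem_image_of_mem _ ha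

theorem Good.conj_mem_img (hU : Good t U) {n : ℕ} {g : G} (hg : g ∈ S n) {x : G}
    (hx : x ∈ img U n) : g * x * g⁻¹ ∈ img U n := by
  obtain ⟨a, ha, rfl⟩ := hx
  exact ⟨⟨g, hg⟩ * a * ⟨g, hg⟩⁻¹, hU.conj_mem_U _ ha, by simp⟩

theorem Shr.img_mul (hs : Shr U' U) {n : ℕ} {x y : G} (hx : x ∈ img U' n)
    (hy : y ∈ img U' n) : x * y ∈ img U n := by
  obtain ⟨a, ha, rfl⟩ := hx
  obtain ⟨b, hb, rfl⟩ := hy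
  exact ⟨a * b, hs n a ha b hb, by simp⟩

theorem Good.one_mem_PP (hU : Good t U) : ∀ n, (1 : G) ∈ PP U n
  | 0 => hU.one_mem_img 0
  | n + 1 => by
      have := Set.mul_mem_mul (hU.one_mem_PP n) (hU.one_mem_img (n + 1))
      simpa [PP] using this

theorem PP_subset_subgroup (mono : Monotone S) : ∀ n, ∀ x ∈ PP U n, x ∈ S n
  | 0, x, hx => by obtain ⟨a, _, rfl⟩ := hx; exact a.2
  | n + 1, x, hx => by
      obtain ⟨p, hp, q, hq, rfl⟩ := hx
      obtain ⟨b, _, rfl⟩ := hq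
      exact mul_mem (mono n.le_succ (PP_subset_subgroup mono n p hp)) b.2

theorem Good.PP_succ (hU : Good t U) {n : ℕ} : PP U n ⊆ PP U (n + 1) := fun x hx => by
  have := Set.mul_mem_mul hx (hU.one_mem_img (n + 1))
  simpa [PP] using this

theorem Good.PP_mono (hU : Good t U) {n m : ℕ} (h : n ≤ m) : PP U n ⊆ PP U m := by
  induction m, h using Nat.le_induction with
  | base => exact subset_rfl
  | succ m hm ih => exact ih.trans hU.PP_succ

theorem img_subset_PP (hU : Good t U) : ∀ n, img U n ⊆ PP U n
  | 0 => subset_rfl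
  | n + 1 => fun x hx => by
      have := Set.mul_mem_mul (hU.one_mem_PP n) hx
      simpa [PP] using this

theorem PP_sq (mono : Monotone S) (hU : Good t U) (hU' : Good t U') (hs : Shr U' U) :
    ∀ n, ∀ x ∈ PP U' n, ∀ y ∈ PP U' n, x * y ∈ PP U n
  | 0, x, hx, y, hy => hs.img_mul hx hy
  | n + 1, x, hx, y, hy => by
      obtain ⟨p, hp, q, hq, rfl⟩ := hx
      obtain ⟨p', hp', q', hq', rfl⟩ := hy
      have hp'S : p' ∈ S (n + 1) := mono n.le_succ (PP_subset_subgroup mono n p' hp')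
      have hconj : p'⁻¹ * q * p' ∈ img U' (n + 1) := by
        have := hU'.conj_mem_img (inv_mem hp'S) hq
        simpa using this
      have key : p * q * (p' * q') = p * p' * (p'⁻¹ * q * p' * q') := by group
      rw [key]
      exact Set.mul_mem_mul (PP_sq mono hU hU' hs n p hp p' hp')
        (hs.img_mul hconj hq')

theorem Good.PP_inv (mono : Monotone S) (hU : Good t U) :
    ∀ n, ∀ x ∈ PP U n, x⁻¹ ∈ PP U n
  | 0, x, hx => hU.inv_mem_img hx
  | n + 1, x, hx => by
      obtain ⟨p, hp, q, hq, rfl⟩ := hx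
      have hpS : p ∈ S (n + 1) := mono n.le_succ (PP_subset_subgroup mono n p hp)
      have hconj : p * q⁻¹ * p⁻¹ ∈ img U (n + 1) :=
        hU.conj_mem_img hpS (hU.inv_mem_img hq)
      have key : (p * q)⁻¹ = p⁻¹ * (p * q⁻¹ * p⁻¹) := by group
      rw [key]
      exact Set.mul_mem_mul (hU.PP_inv mono n p hp) hconj

theorem Good.one_mem_NN (hU : Good t U) : (1 : G) ∈ NN U :=
  Set.mem_iUnion.2 ⟨0, hU.one_mem_PP 0⟩

theorem Good.NN_inv (mono : Monotone S) (hU : Good t U) {x : G} (hx : x ∈ NN U) :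
    x⁻¹ ∈ NN U := by
  obtain ⟨n, hn⟩ := Set.mem_iUnion.1 hx
  exact Set.mem_iUnion.2 ⟨n, hU.PP_inv mono n x hn⟩

theorem NN_mul (mono : Monotone S) (hU : Good t U) (hU' : Good t U') (hs : Shr U' U)
    {x y : G} (hx : x ∈ NN U') (hy : y ∈ NN U') : x * y ∈ NN U := by
  obtain ⟨n, hn⟩ := Set.mem_iUnion.1 hx
  obtain ⟨m, hm⟩ := Set.mem_iUnion.1 hy
  refine Set.mem_iUnion.2 ⟨max n m, PP_sq mono hU hU' hs (max n m) x ?_ y ?_⟩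
  · exact hU'.PP_mono (le_max_left n m) hn
  · exact hU'.PP_mono (le_max_right n m) hm

theorem Good.img_subset_NN (hU : Good t U) (n : ℕ) : img U n ⊆ NN U :=
  (img_subset_PP hU n).trans (Set.subset_iUnion (fun k => PP U k) n)

end Basic

section Shrink

variable {S : ℕ → Subgroup G} {t : (n : ℕ) → TopologicalSpace (S n)}

theorem exists_shrink (htg : ∀ n, @IsTopologicalGroup (S n) (t n) _)
    (hSIN : ∀ n, ∀ W ∈ @nhds _ (t n) (1 : S n), ∃ U : Set (S n),
      U ⊆ W ∧ @IsOpen _ (t n) U ∧ (1 : S n) ∈ U ∧ U⁻¹ = U ∧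
      ∀ g : S n, (fun x => g * x * g⁻¹) '' U = U)
    {U : ∀ n, Set (S n)} (hU : Good t U) :
    ∃ U', Good t U' ∧ Shr U' U := by
  have H : ∀ n, ∃ U'n : Set (S n),
      (@IsOpen _ (t n) U'n ∧ (1 : S n) ∈ U'n ∧ U'n⁻¹ = U'n ∧
        ∀ g : S n, (fun x => g * x * g⁻¹) '' U'n = U'n) ∧
      ∀ a ∈ U'n, ∀ b ∈ U'n, a * b ∈ U n := by
    intro n
    letI := t n
    haveI := htg n
    have hUn : U n ∈ 𝓝 (1 : S n) := (hU n).1.mem_nhds (hU n).2.1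
    obtain ⟨V, hVo, hV1, hVmul⟩ := exists_open_nhds_one_mul_subset hUn
    obtain ⟨U'n, hsub, ho, h1, hinv, hconj⟩ := hSIN n V (hVo.mem_nhds hV1)
    exact ⟨U'n, ⟨ho, h1, hinv, hconj⟩,
      fun a ha b hb => hVmul (Set.mul_mem_mul (hsub ha) (hsub hb))⟩
  choose U' h1 h2 using H
  exact ⟨U', h1, h2⟩

end Shrink

section WUS

variable {S : ℕ → Subgroup G} {t : (n : ℕ) → TopologicalSpace (S n)}

/-- The left group uniformity generated by the sets `EE U` for good `U`. -/
noncomputable def wUS (S : ℕ → Subgroup G) (t : (n : ℕ) → TopologicalSpace (S n))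
    (mono : Monotone S)
    (htg : ∀ n, @IsTopologicalGroup (S n) (t n) _)
    (hSIN : ∀ n, ∀ W ∈ @nhds _ (t n) (1 : S n), ∃ U : Set (S n),
      U ⊆ W ∧ @IsOpen _ (t n) U ∧ (1 : S n) ∈ U ∧ U⁻¹ = U ∧
      ∀ g : S n, (fun x => g * x * g⁻¹) '' U = U) : UniformSpace G :=
  UniformSpace.ofCore
    { uniformity := ⨅ Ug : {U : ∀ n, Set (S n) // Good t U}, 𝓟 (EE Ug.1)
      refl := le_iInf fun Ug => principal_mono.2 fun p hp => by
        have hp' : p.1 = p.2 := hp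
        show p.2⁻¹ * p.1 ∈ NN Ug.1
        rw [hp', inv_mul_cancel]
        exact Ug.2.one_mem_NN
      symm := tendsto_iInf.2 fun Ug => tendsto_principal.2 <| by
        refine mem_of_superset (mem_iInf_of_mem Ug (mem_principal_self _)) ?_
        rintro ⟨x, y⟩ hxy
        show x⁻¹ * y ∈ NN Ug.1
        have : (y⁻¹ * x)⁻¹ ∈ NN Ug.1 := Ug.2.NN_inv mono hxy
        simpa using this
      comp := le_iInf fun Ug => le_principal_iff.2 <| by
        obtain ⟨U', hU', hs⟩ := exists_shrink htg hSIN Ug.2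
        refine mem_of_superset
          (mem_lift' (mem_iInf_of_mem ⟨U', hU'⟩ (mem_principal_self _))) ?_
        rintro ⟨x, y⟩ ⟨z, h1, h2⟩
        show y⁻¹ * x ∈ NN Ug.1
        have hmul := NN_mul mono Ug.2 hU' hs h2 h1
        have : y⁻¹ * z * (z⁻¹ * x) = y⁻¹ * x := by group
        rwa [this] at hmul }

theorem EE_mem_wUS (mono : Monotone S) (htg : ∀ n, @IsTopologicalGroup (S n) (t n) _)
    (hSIN : ∀ n, ∀ W ∈ @nhds _ (t n) (1 : S n), ∃ U : Set (S n),
      U ⊆ W ∧ @IsOpen _ (t n) U ∧ (1 : S n) ∈ U ∧ U⁻¹ = U ∧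
      ∀ g : S n, (fun x => g * x * g⁻¹) '' U = U)
    {U : ∀ n, Set (S n)} (hU : Good t U) :
    EE U ∈ 𝓤[wUS S t mono htg hSIN] :=
  mem_iInf_of_mem ⟨U, hU⟩ (mem_principal_self _)

theorem wUS_admissible (mono : Monotone S) (htg : ∀ n, @IsTopologicalGroup (S n) (t n) _)
    (hSIN : ∀ n, ∀ W ∈ @nhds _ (t n) (1 : S n), ∃ U : Set (S n),
      U ⊆ W ∧ @IsOpen _ (t n) U ∧ (1 : S n) ∈ U ∧ U⁻¹ = U ∧
      ∀ g : S n, (fun x => g * x * g⁻¹) '' U = U)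
    (u : (n : ℕ) → UniformSpace (S n))
    (hbasis : ∀ n, (@uniformity _ (u n)).HasBasis
      (fun U : Set (S n) => @IsOpen _ (t n) U ∧ (1 : S n) ∈ U ∧ U⁻¹ = U)
      (fun U => {p : S n × S n | p.2⁻¹ * p.1 ∈ U ∧ p.1 * p.2⁻¹ ∈ U})) :
    ∀ n, UniformContinuous[u n, wUS S t mono htg hSIN] (Subtype.val : S n → G) := by
  intro n
  show Tendsto _ (@uniformity _ (u n)) (⨅ Ug : {U : ∀ n, Set (S n) // Good t U}, 𝓟 (EE Ug.1))
  refine tendsto_iInf.2 fun Ug => tendsto_principal.2 ?_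
  have hbmem : {p : S n × S n | p.2⁻¹ * p.1 ∈ Ug.1 n ∧ p.1 * p.2⁻¹ ∈ Ug.1 n}
      ∈ @uniformity _ (u n) :=
    (hbasis n).mem_of_mem ⟨(Ug.2 n).1, (Ug.2 n).2.1, (Ug.2 n).2.2.1⟩
  refine eventually_of_mem hbmem ?_
  rintro ⟨a, b⟩ ⟨h1, _⟩
  show ((b : G))⁻¹ * (a : G) ∈ NN Ug.1
  have : ((b⁻¹ * a : S n) : G) ∈ img Ug.1 n := Set.mem_image_of_mem _ h1
  have h2 : ((b : G))⁻¹ * (a : G) ∈ img Ug.1 n := by simpa using this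
  exact Ug.2.img_subset_NN n h2

end WUS

section Chain

variable {S : ℕ → Subgroup G} {t : (n : ℕ) → TopologicalSpace (S n)}

/-- Right-associated compositions `W (k+1) ○ W (k+2) ○ ⋯ ○ W (k+n+1)`. -/
def Kr (W : ℕ → Set (G × G)) : ℕ → ℕ → Set (G × G)
  | 0, k => W (k + 1)
  | n + 1, k => W (k + 1) ○ Kr W n (k + 1)

theorem Kr_subset {u' : UniformSpace G} {W : ℕ → Set (G × G)}
    (hWmem : ∀ n, W n ∈ 𝓤[u']) (hWcomp : ∀ n, W (n + 1) ○ W (n + 1) ⊆ W n) :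
    ∀ n k, Kr W n k ⊆ W k
  | 0, k => by
      rintro ⟨x, y⟩ h
      exact hWcomp k ⟨y, h, @refl_mem_uniformity _ u' _ _ (hWmem (k + 1))⟩
  | n + 1, k => by
      rintro ⟨x, y⟩ ⟨z, h1, h2⟩
      exact hWcomp k ⟨z, h1, Kr_subset hWmem hWcomp n (k + 1) h2⟩

theorem Kr_snoc {W : ℕ → Set (G × G)} :
    ∀ n k, ∀ {a b c : G}, (a, b) ∈ Kr W n k → (b, c) ∈ W (k + n + 2) →
      (a, c) ∈ Kr W (n + 1) k
  | 0, k, a, b, c, h1, h2 => ⟨b, h1, h2⟩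
  | n + 1, k, a, b, c, h1, h2 => by
      obtain ⟨z, hz1, hz2⟩ := h1
      have h2' : (b, c) ∈ W ((k + 1) + (n + 1) + 1) := by
        have : (k + 1) + (n + 1) + 1 = k + (n + 1) + 2 := by omega
        rw [this]; exact h2
      have h2'' : (b, c) ∈ W ((k + 1) + n + 2) := by
        have : (k + 1) + n + 2 = (k + 1) + (n + 1) + 1 := by omega
        rw [this]; exact h2'
      exact ⟨z, hz1, Kr_snoc n (k + 1) hz2 h2''⟩

theorem exists_good_chain (mono : Monotone S)
    (hSIN : ∀ n, ∀ W ∈ @nhds _ (t n) (1 : S n), ∃ U : Set (S n),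
      U ⊆ W ∧ @IsOpen _ (t n) U ∧ (1 : S n) ∈ U ∧ U⁻¹ = U ∧
      ∀ g : S n, (fun x => g * x * g⁻¹) '' U = U)
    (u : (n : ℕ) → UniformSpace (S n))
    (hbasis : ∀ n, (@uniformity _ (u n)).HasBasis
      (fun U : Set (S n) => @IsOpen _ (t n) U ∧ (1 : S n) ∈ U ∧ U⁻¹ = U)
      (fun U => {p : S n × S n | p.2⁻¹ * p.1 ∈ U ∧ p.1 * p.2⁻¹ ∈ U}))
    (u' : UniformSpace G)
    (hadm : ∀ n, UniformContinuous[u n, u'] (Subtype.val : S n → G))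
    {V : Set (G × G)} (hV : V ∈ 𝓤[u']) :
    ∃ Uu, Good t Uu ∧ ∀ y ∈ NN Uu, ((1 : G), y) ∈ V := by
  classical
  -- a fast-shrinking sequence of entourages of u'
  have hstep : ∀ v : {v : Set (G × G) // v ∈ 𝓤[u']},
      ∃ w : {v : Set (G × G) // v ∈ 𝓤[u']}, w.1 ○ w.1 ⊆ v.1 := by
    intro v
    obtain ⟨w, hw, hsub⟩ := @comp_mem_uniformity_sets _ u' _ v.2
    exact ⟨⟨w, hw⟩, hsub⟩
  choose F hF using hstep
  set Ws : ℕ → {v : Set (G × G) // v ∈ 𝓤[u']} := fun n => F^[n] ⟨V, hV⟩ with hWs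
  set W : ℕ → Set (G × G) := fun n => (Ws n).1 with hWdef
  have hW0 : W 0 = V := rfl
  have hWmem : ∀ n, W n ∈ 𝓤[u'] := fun n => (Ws n).2
  have hWcomp : ∀ n, W (n + 1) ○ W (n + 1) ⊆ W n := by
    intro n
    have hit : Ws (n + 1) = F (Ws n) := Function.iterate_succ_apply' F n _
    have : W (n + 1) = (F (Ws n)).1 := congrArg Subtype.val hit
    rw [this]
    exact hF (Ws n)
  -- choose good neighborhoods
  have hchoose : ∀ j, ∃ Y : Set (S j),
      (@IsOpen _ (t j) Y ∧ (1 : S j) ∈ Y ∧ Y⁻¹ = Y) ∧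
      {p : S j × S j | p.2⁻¹ * p.1 ∈ Y ∧ p.1 * p.2⁻¹ ∈ Y} ⊆
        {p : S j × S j | ((p.1 : G), (p.2 : G)) ∈ W (j + 1)} := by
    intro j
    have hWj : {p : S j × S j | ((p.1 : G), (p.2 : G)) ∈ W (j + 1)}
        ∈ @uniformity _ (u j) := mem_map.1 (hadm j (hWmem (j + 1)))
    obtain ⟨Y, hY, hYsub⟩ := (hbasis j).mem_iff.1 hWj
    exact ⟨Y, hY, hYsub⟩
  choose Y hYb hYsub using hchoose
  have hSINj : ∀ j, ∃ Uj : Set (S j), Uj ⊆ Y j ∧ @IsOpen _ (t j) Uj ∧ (1 : S j) ∈ Uj ∧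
      Uj⁻¹ = Uj ∧ ∀ g : S j, (fun x => g * x * g⁻¹) '' Uj = Uj := by
    intro j
    exact hSIN j (Y j) ((hYb j).1.mem_nhds (hYb j).2.1)
  choose Uu hUsub hUo hU1 hUinv hUconj using hSINj
  have hGood : Good t Uu := fun n => ⟨hUo n, hU1 n, hUinv n, hUconj n⟩
  refine ⟨Uu, hGood, ?_⟩
  -- the chain argument
  have main : ∀ n, ∀ y ∈ PP Uu n, ((1 : G), y) ∈ Kr W n 0 := by
    intro n
    induction n with
    | zero =>
      rintro y ⟨a, ha, rfl⟩
      have hainv : a⁻¹ ∈ Uu 0 := by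
        have : a⁻¹ ∈ (Uu 0)⁻¹ := by rw [Set.mem_inv]; simpa
        rwa [hUinv 0] at this
      have hpair : ((1 : S 0), a) ∈
          {p : S 0 × S 0 | p.2⁻¹ * p.1 ∈ Y 0 ∧ p.1 * p.2⁻¹ ∈ Y 0} := by
        constructor
        · show a⁻¹ * 1 ∈ Y 0
          simpa using hUsub 0 hainv
        · show 1 * a⁻¹ ∈ Y 0
          simpa using hUsub 0 hainv
      have := hYsub 0 hpair
      simpa [Kr] using this
    | succ n ih =>
      rintro y ⟨p, hp, q, ⟨qh, hqh, rfl⟩, rfl⟩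
      have hpS : p ∈ S (n + 1) := mono n.le_succ (PP_subset_subgroup mono n p hp)
      set g : S (n + 1) := ⟨p, hpS⟩ with hg
      have hqinv : qh⁻¹ ∈ Uu (n + 1) := by
        have : qh⁻¹ ∈ (Uu (n + 1))⁻¹ := by rw [Set.mem_inv]; simpa
        rwa [hUinv (n + 1)] at this
      have hconj : g * qh⁻¹ * g⁻¹ ∈ Uu (n + 1) := hGood.conj_mem_U g hqinv
      have hpair : (g, g * qh) ∈
          {pp : S (n + 1) × S (n + 1) |
            pp.2⁻¹ * pp.1 ∈ Y (n + 1) ∧ pp.1 * pp.2⁻¹ ∈ Y (n + 1)} := by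
        constructor
        · show (g * qh)⁻¹ * g ∈ Y (n + 1)
          have heq : (g * qh)⁻¹ * g = qh⁻¹ := by group
          rw [heq]
          exact hUsub (n + 1) hqinv
        · show g * (g * qh)⁻¹ ∈ Y (n + 1)
          have heq : g * (g * qh)⁻¹ = g * qh⁻¹ * g⁻¹ := by group
          rw [heq]
          exact hUsub (n + 1) hconj
      have hstep : (p, p * (qh : G)) ∈ W (n + 2) := by
        have := hYsub (n + 1) hpair
        simpa using this
      have hstep' : (p, p * (qh : G)) ∈ W (0 + n + 2) := by
        have : (0 : ℕ) + n + 2 = n + 2 := by omega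
        rw [this]; exact hstep
      exact Kr_snoc n 0 (ih p hp) hstep'
  intro y hy
  obtain ⟨n, hn⟩ := Set.mem_iUnion.1 hy
  rw [← hW0]
  exact Kr_subset hWmem hWcomp n 0 (main n y hn)

end Chain

section UC

variable {S : ℕ → Subgroup G} {t : (n : ℕ) → TopologicalSpace (S n)}

theorem u_comap (mono : Monotone S) (u : (n : ℕ) → UniformSpace (S n))
    (hcompat_u : ∀ n, u n =
      UniformSpace.comap ((Subgroup.inclusion (mono (Nat.le_succ n))) : S n → S (n + 1))
        (u (n + 1)))
    {n m : ℕ} (h : n ≤ m) :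
    u n = UniformSpace.comap ((Subgroup.inclusion (mono h)) : S n → S m) (u m) := by
  induction m, h using Nat.le_induction with
  | base =>
    have : ((Subgroup.inclusion (mono (le_refl n))) : S n → S n) = id :=
      funext fun x => Subtype.ext rfl
    rw [this, uniformSpace_comap_id, id]
  | succ m hm ih =>
    have hfun : (⇑(Subgroup.inclusion (mono (Nat.le_succ m))) ∘
        ⇑(Subgroup.inclusion (mono hm)))
        = (⇑(Subgroup.inclusion (mono (hm.trans (Nat.le_succ m)))) : S n → S (m + 1)) :=
      funext fun x => Subtype.ext rfl
    rw [ih, hcompat_u m, ← UniformSpace.comap_comap, hfun]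

theorem uc_inclusion (mono : Monotone S) (u : (n : ℕ) → UniformSpace (S n))
    (hcompat_u : ∀ n, u n =
      UniformSpace.comap ((Subgroup.inclusion (mono (Nat.le_succ n))) : S n → S (n + 1))
        (u (n + 1)))
    {n m : ℕ} (h : n ≤ m) :
    UniformContinuous[u n, u m] (Subgroup.inclusion (mono h)) := by
  rw [u_comap mono u hcompat_u h]
  exact uniformContinuous_comap

theorem uc_inv (u : (n : ℕ) → UniformSpace (S n))
    (hbasis : ∀ n, (@uniformity _ (u n)).HasBasis
      (fun U : Set (S n) => @IsOpen _ (t n) U ∧ (1 : S n) ∈ U ∧ U⁻¹ = U)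
      (fun U => {p : S n × S n | p.2⁻¹ * p.1 ∈ U ∧ p.1 * p.2⁻¹ ∈ U}))
    (m : ℕ) : UniformContinuous[u m, u m] (fun x : S m => x⁻¹) := by
  show Tendsto _ _ _
  refine ((hbasis m).tendsto_iff (hbasis m)).2 ?_
  intro Yb hYb
  refine ⟨Yb, hYb, ?_⟩
  rintro ⟨a, b⟩ ⟨h1, h2⟩
  constructor
  · show (b⁻¹)⁻¹ * a⁻¹ ∈ Yb
    have : (a * b⁻¹)⁻¹ ∈ Yb := by rw [← hYb.2.2]; exact Set.inv_mem_inv.2 h2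
    simpa [mul_inv_rev] using this
  · show a⁻¹ * (b⁻¹)⁻¹ ∈ Yb
    have : (b⁻¹ * a)⁻¹ ∈ Yb := by rw [← hYb.2.2]; exact Set.inv_mem_inv.2 h1
    simpa [mul_inv_rev] using this

theorem uc_mulLeft (u : (n : ℕ) → UniformSpace (S n))
    (hSIN : ∀ n, ∀ W ∈ @nhds _ (t n) (1 : S n), ∃ U : Set (S n),
      U ⊆ W ∧ @IsOpen _ (t n) U ∧ (1 : S n) ∈ U ∧ U⁻¹ = U ∧
      ∀ g : S n, (fun x => g * x * g⁻¹) '' U = U)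
    (hbasis : ∀ n, (@uniformity _ (u n)).HasBasis
      (fun U : Set (S n) => @IsOpen _ (t n) U ∧ (1 : S n) ∈ U ∧ U⁻¹ = U)
      (fun U => {p : S n × S n | p.2⁻¹ * p.1 ∈ U ∧ p.1 * p.2⁻¹ ∈ U}))
    (m : ℕ) (g : S m) : UniformContinuous[u m, u m] (fun x : S m => g * x) := by
  show Tendsto _ _ _
  refine ((hbasis m).tendsto_iff (hbasis m)).2 ?_
  intro Yb hYb
  obtain ⟨U', hsub, ho, h1, hinv, hconj⟩ :=
    hSIN m Yb (hYb.1.mem_nhds hYb.2.1)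
  refine ⟨U', ⟨ho, h1, hinv⟩, ?_⟩
  rintro ⟨a, b⟩ ⟨ha1, ha2⟩
  constructor
  · show (g * b)⁻¹ * (g * a) ∈ Yb
    have heq : (g * b)⁻¹ * (g * a) = b⁻¹ * a := by group
    rw [heq]; exact hsub ha1
  · show (g * a) * (g * b)⁻¹ ∈ Yb
    have heq : (g * a) * (g * b)⁻¹ = g * (a * b⁻¹) * g⁻¹ := by group
    rw [heq]
    refine hsub ?_
    rw [← hconj g]
    exact Set.mem_image_of_mem _ ha2

theorem uc_mulRight (u : (n : ℕ) → UniformSpace (S n))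
    (hSIN : ∀ n, ∀ W ∈ @nhds _ (t n) (1 : S n), ∃ U : Set (S n),
      U ⊆ W ∧ @IsOpen _ (t n) U ∧ (1 : S n) ∈ U ∧ U⁻¹ = U ∧
      ∀ g : S n, (fun x => g * x * g⁻¹) '' U = U)
    (hbasis : ∀ n, (@uniformity _ (u n)).HasBasis
      (fun U : Set (S n) => @IsOpen _ (t n) U ∧ (1 : S n) ∈ U ∧ U⁻¹ = U)
      (fun U => {p : S n × S n | p.2⁻¹ * p.1 ∈ U ∧ p.1 * p.2⁻¹ ∈ U}))
    (m : ℕ) (g : S m) : UniformContinuous[u m, u m] (fun x : S m => x * g) := by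
  show Tendsto _ _ _
  refine ((hbasis m).tendsto_iff (hbasis m)).2 ?_
  intro Yb hYb
  obtain ⟨U', hsub, ho, h1, hinv, hconj⟩ :=
    hSIN m Yb (hYb.1.mem_nhds hYb.2.1)
  refine ⟨U', ⟨ho, h1, hinv⟩, ?_⟩
  rintro ⟨a, b⟩ ⟨ha1, ha2⟩
  constructor
  · show (b * g)⁻¹ * (a * g) ∈ Yb
    have heq : (b * g)⁻¹ * (a * g) = g⁻¹ * (b⁻¹ * a) * (g⁻¹)⁻¹ := by group
    rw [heq]
    refine hsub ?_
    rw [← hconj g⁻¹]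
    exact Set.mem_image_of_mem _ ha1
  · show (a * g) * (b * g)⁻¹ ∈ Yb
    have heq : (a * g) * (b * g)⁻¹ = a * b⁻¹ := by group
    rw [heq]; exact hsub ha2

end UC

end Stmt10Aux

/-- Let `(X_n)` be an increasing sequence of subgroups of a group `G` with union `G`, each
carrying a group topology making it a topological subgroup of the next one, each a SIN-group
(a neighborhood base at `1` of open symmetric invariant sets), and each carrying its two-sided
uniformity (with basic entourages `U^{LR} = {(x,y) : x ∈ yU ∩ Uy}` for symmetric open
neighborhoods `U` of `1`), so that `(X_n)` is a tower of uniform spaces.  Then the uniform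
direct limit `u-lim X_n`, i.e. `G` with the topology induced by the direct limit uniformity,
is a topological group. -/
theorem statement10 {G : Type u} [Group G] (S : ℕ → Subgroup G)
    (mono : Monotone S) (hunion : ∀ x : G, ∃ n, x ∈ S n)
    (t : (n : ℕ) → TopologicalSpace (S n))
    (htg : ∀ n, @IsTopologicalGroup (S n) (t n) _)
    (hcompat_t : ∀ n, t n =
      TopologicalSpace.induced (⇑(Subgroup.inclusion (mono (Nat.le_succ n)))) (t (n + 1)))
    (hSIN : ∀ n, ∀ W ∈ @nhds _ (t n) (1 : S n), ∃ U : Set (S n),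
      U ⊆ W ∧ @IsOpen _ (t n) U ∧ (1 : S n) ∈ U ∧ U⁻¹ = U ∧
      ∀ g : S n, (fun x => g * x * g⁻¹) '' U = U)
    (u : (n : ℕ) → UniformSpace (S n))
    (htop : ∀ n, (u n).toTopologicalSpace = t n)
    (hbasis : ∀ n, (@uniformity _ (u n)).HasBasis
      (fun U : Set (S n) => @IsOpen _ (t n) U ∧ (1 : S n) ∈ U ∧ U⁻¹ = U)
      (fun U => {p : S n × S n | p.2⁻¹ * p.1 ∈ U ∧ p.1 * p.2⁻¹ ∈ U}))
    (hcompat_u : ∀ n, u n =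
      UniformSpace.comap (⇑(Subgroup.inclusion (mono (Nat.le_succ n)))) (u (n + 1))) :
    @IsTopologicalGroup G
      (uDirLim (fun n => (S n : Set G)) u).toTopologicalSpace _ := by
  classical
  letI uu : UniformSpace G := uDirLim (fun n => ((S n : Set G))) u
  have hadm : ∀ n, UniformContinuous[u n, uu] (Subtype.val : S n → G) := fun n =>
    uniformContinuous_sInf_rng.2 fun v hv => hv n
  -- transfer of uniform continuity from the pieces to the limit
  have key : ∀ f : G → G, (∀ n, UniformContinuous[u n, uu] (fun x : S n => f ↑x)) →
      UniformContinuous[uu, uu] f := by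
    intro f hf
    have hmem : UniformSpace.comap f uu ∈
        {u' : UniformSpace G |
          ∀ n, @UniformContinuous _ _ (u n) u'
            (Subtype.val : ((fun k => (S k : Set G)) n) → G)} :=
      fun n => uniformContinuous_comap' (hf n)
    have hle : uu ≤ UniformSpace.comap f uu := UniformSpace.sInf_le hmem
    exact uniformContinuous_iff.2 hle
  have contL : ∀ g : G, Continuous fun x : G => g * x := by
    intro g
    refine (key _ ?_).continuous
    intro n
    obtain ⟨k, hk⟩ := hunion g
    have h1 : UniformContinuous[u n, u (max n k)]
        (Subgroup.inclusion (mono (le_max_left n k))) :=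
      Stmt10Aux.uc_inclusion mono u hcompat_u (le_max_left n k)
    have h2 : UniformContinuous[u (max n k), u (max n k)]
        (fun x : S (max n k) => (⟨g, mono (le_max_right n k) hk⟩ : S (max n k)) * x) :=
      Stmt10Aux.uc_mulLeft u hSIN hbasis (max n k) _
    exact (hadm (max n k)).comp (h2.comp h1)
  have contR : ∀ g : G, Continuous fun x : G => x * g := by
    intro g
    refine (key _ ?_).continuous
    intro n
    obtain ⟨k, hk⟩ := hunion g
    have h1 : UniformContinuous[u n, u (max n k)]
        (Subgroup.inclusion (mono (le_max_left n k))) :=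
      Stmt10Aux.uc_inclusion mono u hcompat_u (le_max_left n k)
    have h2 : UniformContinuous[u (max n k), u (max n k)]
        (fun x : S (max n k) => x * (⟨g, mono (le_max_right n k) hk⟩ : S (max n k))) :=
      Stmt10Aux.uc_mulRight u hSIN hbasis (max n k) _
    exact (hadm (max n k)).comp (h2.comp h1)
  have contInv : Continuous fun x : G => x⁻¹ :=
    (key _ fun n => (hadm n).comp (Stmt10Aux.uc_inv u hbasis n)).continuous
  -- entourages from good sequences
  have hEE : ∀ (Uq : ∀ n, Set (S n)), Stmt10Aux.Good t Uq →
      Stmt10Aux.EE Uq ∈ 𝓤[uu] := by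
    intro Uq hUq
    have hw : Stmt10Aux.wUS S t mono htg hSIN ∈
        {u' : UniformSpace G |
          ∀ n, @UniformContinuous _ _ (u n) u'
            (Subtype.val : ((fun k => (S k : Set G)) n) → G)} :=
      fun n => Stmt10Aux.wUS_admissible mono htg hSIN u hbasis n
    have hle : uu ≤ Stmt10Aux.wUS S t mono htg hSIN := UniformSpace.sInf_le hw
    have hle' : 𝓤[uu] ≤ 𝓤[Stmt10Aux.wUS S t mono htg hSIN] := hle
    exact hle' (Stmt10Aux.EE_mem_wUS mono htg hSIN hUq)
  have hNN_nhds : ∀ (Uq : ∀ n, Set (S n)), Stmt10Aux.Good t Uq →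
      Stmt10Aux.NN Uq ∈ 𝓝 (1 : G) := by
    intro Uq hUq
    rw [nhds_eq_comap_uniformity]
    refine mem_comap.2 ⟨Stmt10Aux.EE Uq, hEE Uq hUq, ?_⟩
    intro y hy
    have h1 : y⁻¹ ∈ Stmt10Aux.NN Uq := by
      have := hy
      simp only [Stmt10Aux.EE, Set.mem_setOf_eq] at this
      simpa using this
    simpa using hUq.NN_inv mono h1
  have hmul : Tendsto (Function.uncurry ((· * ·) : G → G → G))
      (𝓝 1 ×ˢ 𝓝 1) (𝓝 1) := by
    rw [tendsto_def]
    intro B hB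
    rw [nhds_eq_comap_uniformity] at hB
    obtain ⟨E, hE, hEB⟩ := mem_comap.1 hB
    obtain ⟨Ua, hUa, hball⟩ :=
      Stmt10Aux.exists_good_chain mono hSIN u hbasis uu hadm hE
    obtain ⟨Ub, hUb, hs⟩ := Stmt10Aux.exists_shrink htg hSIN hUa
    refine mem_of_superset (prod_mem_prod (hNN_nhds Ub hUb) (hNN_nhds Ub hUb)) ?_
    rintro ⟨a, b⟩ ⟨ha, hb⟩
    have hab : a * b ∈ Stmt10Aux.NN Ua := Stmt10Aux.NN_mul mono hUa hUb hs ha hb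
    exact hEB (hball _ hab)
  have hinv : Tendsto (fun x : G => x⁻¹) (𝓝 1) (𝓝 1) := by
    simpa using contInv.tendsto (1 : G)
  have hleft : ∀ x₀ : G, 𝓝 x₀ = map (x₀ * ·) (𝓝 1) := by
    intro x₀
    refine le_antisymm ?_ ?_
    · have h1 : Tendsto (fun x => x₀⁻¹ * x) (𝓝 x₀) (𝓝 1) := by
        simpa using (contL x₀⁻¹).tendsto x₀
      calc 𝓝 x₀ = map (x₀ * ·) (map (x₀⁻¹ * ·) (𝓝 x₀)) := by
            rw [map_map]
            have : ((x₀ * ·) ∘ (x₀⁻¹ * ·)) = id := funext fun x => by simp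
            rw [this, map_id]
        _ ≤ map (x₀ * ·) (𝓝 1) := map_mono h1
    · exact (by simpa using (contL x₀).tendsto (1 : G) : Tendsto (fun x => x₀ * x) (𝓝 1) (𝓝 x₀))
  have hconj : ∀ x₀ : G, Tendsto (x₀ * · * x₀⁻¹) (𝓝 1) (𝓝 1) := by
    intro x₀
    have hc : Continuous fun x : G => x₀ * x * x₀⁻¹ := by
      have := (contR x₀⁻¹).comp (contL x₀)
      simpa [Function.comp_def] using this
    simpa using hc.tendsto (1 : G)
  exact IsTopologicalGroup.of_nhds_one hmul hinv hleft hconj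
end

section
/- Let (X_n)_{n∈ω} be an increasing sequence of topological groups in which each X_n is a topological subgroup of X_{n+1}, each X_n is a SIN-group, and each X_n carries its two-sided uniformity. Then the topology of the uniform direct limit u-lim X_n coincides with the topology of the group direct limit g-lim X_n: it is the strongest topology on X = ⋃_n X_n that turns X into a topological group and makes all the identity inclusions X_n → X continuous. In particular, the identity map u-lim X_n → g-lim X_n is a homeomorphism. -/
open Set Filter Topology Pointwise Uniformity

universe u

open scoped SetRel

namespace SIN11

variable {G : Type u} [Group G]

/-- An *admissible* set at level `n`: an open symmetric invariant neighborhood of `1`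
in `S n`, viewed as a subset of `G`. -/
structure Adm (S : ℕ → Subgroup G) (t : (n : ℕ) → TopologicalSpace (S n)) (n : ℕ)
    (V : Set G) : Prop where
  subset : V ⊆ (S n : Set G)
  one_mem : (1 : G) ∈ V
  inv_mem : ∀ v ∈ V, v⁻¹ ∈ V
  conj_mem : ∀ g ∈ S n, ∀ v ∈ V, g * v * g⁻¹ ∈ V
  isOpen : @IsOpen _ (t n) ((Subtype.val : S n → G) ⁻¹' V)

variable {S : ℕ → Subgroup G} {t : (n : ℕ) → TopologicalSpace (S n)}

/-- Left-nested products `φ 0 * φ 1 * ⋯ * φ n`. -/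
def P (φ : ℕ → Set G) : ℕ → Set G
  | 0 => φ 0
  | n + 1 => P φ n * φ (n + 1)

def W (φ : ℕ → Set G) : Set G := ⋃ n, P φ n

def Ent (φ : ℕ → Set G) : Set (G × G) := {p | p.1 * p.2⁻¹ ∈ W φ}

section basic

variable {φ ψ χ : ℕ → Set G}

theorem SLe (mono : Monotone S) {m n : ℕ} (h : m ≤ n) : (S m : Set G) ⊆ (S n : Set G) :=
  fun x hx => mono h hx

theorem one_mem_P (hφ : ∀ k, Adm S t k (φ k)) : ∀ n, (1 : G) ∈ P φ n
  | 0 => (hφ 0).one_mem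
  | n + 1 => by
      have : (1 : G) * 1 ∈ P φ n * φ (n + 1) :=
        Set.mul_mem_mul (one_mem_P hφ n) (hφ (n + 1)).one_mem
      simpa [P] using this

theorem P_subset_S (mono : Monotone S) (hφ : ∀ k, Adm S t k (φ k)) :
    ∀ n, P φ n ⊆ (S n : Set G)
  | 0 => (hφ 0).subset
  | n + 1 => by
      rintro x hx
      rcases Set.mem_mul.1 hx with ⟨a, ha, b, hb, rfl⟩
      exact mul_mem (SLe mono (Nat.le_succ n) (P_subset_S mono hφ n ha))
        ((hφ (n + 1)).subset hb)

theorem subset_P (hφ : ∀ k, Adm S t k (φ k)) : ∀ n, φ n ⊆ P φ n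
  | 0 => le_refl _
  | n + 1 => fun v hv => by
      have : (1 : G) * v ∈ P φ n * φ (n + 1) :=
        Set.mul_mem_mul (one_mem_P hφ n) hv
      simpa [P] using this

theorem P_mono (hφ : ∀ k, Adm S t k (φ k)) {m n : ℕ} (h : m ≤ n) : P φ m ⊆ P φ n := by
  induction n, h using Nat.le_induction with
  | base => exact le_refl _
  | succ n hmn ih =>
      intro x hx
      have : x * 1 ∈ P φ n * φ (n + 1) := Set.mul_mem_mul (ih hx) (hφ (n + 1)).one_mem
      simpa [P] using this

theorem subset_W (hφ : ∀ k, Adm S t k (φ k)) (n : ℕ) : φ n ⊆ W φ :=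
  fun v hv => Set.mem_iUnion.2 ⟨n, subset_P hφ n hv⟩

theorem one_mem_W (hφ : ∀ k, Adm S t k (φ k)) : (1 : G) ∈ W φ :=
  Set.mem_iUnion.2 ⟨0, one_mem_P hφ 0⟩

/-- `v * p = p * v'` with `v'` still in `φ (n+1)`, for `p` in the subgroup `S (n+1)`. -/
theorem comm_aux (hφ : ∀ k, Adm S t k (φ k)) {n : ℕ} {v p : G}
    (hv : v ∈ φ (n + 1)) (hp : p ∈ S (n + 1)) :
    ∃ v' ∈ φ (n + 1), v * p = p * v' := by
  refine ⟨p⁻¹ * v * p, ?_, by group⟩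
  have := (hφ (n + 1)).conj_mem p⁻¹ (inv_mem hp) v hv
  simpa using this

theorem P_inv (mono : Monotone S) (hφ : ∀ k, Adm S t k (φ k)) :
    ∀ n, ∀ x ∈ P φ n, x⁻¹ ∈ P φ n
  | 0 => fun x hx => (hφ 0).inv_mem x hx
  | n + 1 => by
      rintro x hx
      rcases Set.mem_mul.1 hx with ⟨a, ha, b, hb, rfl⟩
      have ha' : a⁻¹ ∈ P φ n := P_inv mono hφ n a ha
      have hb' : b⁻¹ ∈ φ (n + 1) := (hφ (n + 1)).inv_mem b hb
      have hmem : a⁻¹ ∈ S (n + 1) := mono (Nat.le_succ n) (P_subset_S mono hφ n ha')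
      rcases comm_aux hφ hb' hmem with ⟨v', hv', hcomm⟩
      have heq : (a * b)⁻¹ = a⁻¹ * v' := by rw [mul_inv_rev, hcomm]
      rw [heq]
      exact Set.mul_mem_mul ha' hv'

theorem W_inv (mono : Monotone S) (hφ : ∀ k, Adm S t k (φ k)) {x : G}
    (hx : x ∈ W φ) : x⁻¹ ∈ W φ := by
  rcases Set.mem_iUnion.1 hx with ⟨n, hn⟩
  exact Set.mem_iUnion.2 ⟨n, P_inv mono hφ n x hn⟩

theorem P_mul_P (mono : Monotone S) (hψ : ∀ k, Adm S t k (ψ k))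
    (hφ : ∀ k, Adm S t k (φ k))
    (hh : ∀ k, ∀ a ∈ ψ k, ∀ b ∈ ψ k, a * b ∈ φ k) :
    ∀ n, ∀ x ∈ P ψ n, ∀ y ∈ P ψ n, x * y ∈ P φ n
  | 0 => fun x hx y hy => hh 0 x hx y hy
  | n + 1 => by
      rintro x hx y hy
      rcases Set.mem_mul.1 hx with ⟨p, hp, v, hv, rfl⟩
      rcases Set.mem_mul.1 hy with ⟨q, hq, w, hw, rfl⟩
      have hqS : q ∈ S (n + 1) := mono (Nat.le_succ n) (P_subset_S mono hψ n hq)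
      rcases comm_aux hψ hv hqS with ⟨v', hv', hcomm⟩
      have hpq : p * q ∈ P φ n := P_mul_P mono hψ hφ hh n p hp q hq
      have hvw : v' * w ∈ φ (n + 1) := hh (n + 1) v' hv' w hw
      have : p * v * (q * w) = p * q * (v' * w) := by
        have : v * q = q * v' := hcomm
        calc p * v * (q * w) = p * (v * q) * w := by group
          _ = p * (q * v') * w := by rw [this]
          _ = p * q * (v' * w) := by group
      rw [this]
      exact Set.mul_mem_mul hpq hvw

theorem W_mul (mono : Monotone S) (hψ : ∀ k, Adm S t k (ψ k))
    (hφ : ∀ k, Adm S t k (φ k))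
    (hh : ∀ k, ∀ a ∈ ψ k, ∀ b ∈ ψ k, a * b ∈ φ k)
    {x y : G} (hx : x ∈ W ψ) (hy : y ∈ W ψ) : x * y ∈ W φ := by
  rcases Set.mem_iUnion.1 hx with ⟨i, hi⟩
  rcases Set.mem_iUnion.1 hy with ⟨j, hj⟩
  refine Set.mem_iUnion.2 ⟨max i j, ?_⟩
  exact P_mul_P mono hψ hφ hh (max i j) x (P_mono hψ (le_max_left i j) hi) y
    (P_mono hψ (le_max_right i j) hj)

theorem P_mono_pointwise (hsub : ∀ k, ψ k ⊆ φ k) : ∀ n, P ψ n ⊆ P φ n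
  | 0 => hsub 0
  | n + 1 => by
      rintro x hx
      rcases Set.mem_mul.1 hx with ⟨a, ha, b, hb, rfl⟩
      exact Set.mul_mem_mul (P_mono_pointwise hsub n ha) (hsub (n + 1) hb)

theorem W_mono_pointwise (hsub : ∀ k, ψ k ⊆ φ k) : W ψ ⊆ W φ := by
  intro x hx
  rcases Set.mem_iUnion.1 hx with ⟨n, hn⟩
  exact Set.mem_iUnion.2 ⟨n, P_mono_pointwise hsub n hn⟩

theorem Adm.inter {n : ℕ} {V V' : Set G} (h : Adm S t n V) (h' : Adm S t n V') :
    Adm S t n (V ∩ V') := by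
  refine ⟨fun x hx => h.subset hx.1, ⟨h.one_mem, h'.one_mem⟩,
    fun v hv => ⟨h.inv_mem v hv.1, h'.inv_mem v hv.2⟩,
    fun g hg v hv => ⟨h.conj_mem g hg v hv.1, h'.conj_mem g hg v hv.2⟩, ?_⟩
  letI := t n
  rw [Set.preimage_inter]
  exact h.isOpen.inter h'.isOpen

end basic

section cont

theorem cont_incl (mono : Monotone S)
    (hcompat_t : ∀ n, t n =
      TopologicalSpace.induced (⇑(Subgroup.inclusion (mono (Nat.le_succ n)))) (t (n + 1)))
    {k n : ℕ} (h : k ≤ n) :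
    @Continuous _ _ (t k) (t n) (fun x : S k => (⟨x.1, mono h x.2⟩ : S n)) := by
  induction n, h using Nat.le_induction with
  | base =>
      have : (fun x : S k => (⟨x.1, mono le_rfl x.2⟩ : S k)) = id := by
        funext x; exact Subtype.ext rfl
      rw [this]; exact continuous_id
  | succ n hkn ih =>
      have hstep : @Continuous _ _ (t n) (t (n + 1))
          (⇑(Subgroup.inclusion (mono (Nat.le_succ n)))) := by
        exact continuous_iff_le_induced.2 (le_of_eq (hcompat_t n))
      have : (fun x : S k => (⟨x.1, mono (Nat.le_succ_of_le hkn) x.2⟩ : S (n + 1))) =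
          (⇑(Subgroup.inclusion (mono (Nat.le_succ n)))) ∘
            (fun x : S k => (⟨x.1, mono hkn x.2⟩ : S n)) := by
        funext x; exact Subtype.ext rfl
      rw [this]
      exact @Continuous.comp _ _ _ (t k) (t n) (t (n + 1)) _ _ hstep ih

theorem open_transfer (mono : Monotone S)
    (hcompat_t : ∀ n, t n =
      TopologicalSpace.induced (⇑(Subgroup.inclusion (mono (Nat.le_succ n)))) (t (n + 1)))
    {k n : ℕ} (h : k ≤ n) {A : Set G}
    (hA : @IsOpen _ (t n) ((Subtype.val : S n → G) ⁻¹' A)) :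
    @IsOpen _ (t k) ((Subtype.val : S k → G) ⁻¹' A) := by
  have := (cont_incl mono hcompat_t h).isOpen_preimage _ hA
  exact this

end cont

section shift

variable {φ : ℕ → Set G}

/-- The shifted admissible sequence: `shift φ m k = φ (k + m + 1) ∩ S k`. -/
def shift (φ : ℕ → Set G) (m : ℕ) : ℕ → Set G := fun k => φ (k + m + 1) ∩ (S k : Set G)

theorem shift_adm (mono : Monotone S)
    (hcompat_t : ∀ n, t n =
      TopologicalSpace.induced (⇑(Subgroup.inclusion (mono (Nat.le_succ n)))) (t (n + 1)))
    (hφ : ∀ k, Adm S t k (φ k)) (m : ℕ) :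
    ∀ k, Adm (S := S) (t := t) k (shift (S := S) φ m k) := by
  intro k
  refine ⟨Set.inter_subset_right, ⟨(hφ (k + m + 1)).one_mem, one_mem _⟩,
    fun v hv => ⟨(hφ (k + m + 1)).inv_mem v hv.1, inv_mem hv.2⟩,
    fun g hg v hv => ⟨(hφ (k + m + 1)).conj_mem g (mono (by omega) hg) v hv.1,
      mul_mem (mul_mem hg hv.2) (inv_mem hg)⟩, ?_⟩
  have h1 : ((Subtype.val : S k → G) ⁻¹' (shift (S := S) φ m k)) =
      ((Subtype.val : S k → G) ⁻¹' (φ (k + m + 1))) := by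
    ext x
    exact ⟨fun hx => hx.1, fun hx => ⟨hx, x.2⟩⟩
  rw [h1]
  exact open_transfer mono hcompat_t (by omega) (hφ (k + m + 1)).isOpen

theorem conj_P_shift (mono : Monotone S) (hφ : ∀ k, Adm S t k (φ k)) {g : G} {m : ℕ}
    (hg : g ∈ S m) : ∀ n, ∀ z ∈ P (shift (S := S) φ m) n, g * z * g⁻¹ ∈ P φ (n + m + 1)
  | 0 => fun z hz => by
      exact subset_P hφ (0 + m + 1)
        ((hφ (0 + m + 1)).conj_mem g (mono (by omega) hg) z hz.1)
  | n + 1 => by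
      rintro z hz
      rcases Set.mem_mul.1 hz with ⟨p, hp, v, hv, rfl⟩
      have h1 : g * p * g⁻¹ ∈ P φ (n + m + 1) := conj_P_shift mono hφ hg n p hp
      have h2 : g * v * g⁻¹ ∈ φ ((n + m + 1) + 1) := by
        have := (hφ (n + 1 + m + 1)).conj_mem g (mono (by omega) hg) v hv.1
        rwa [show n + 1 + m + 1 = (n + m + 1) + 1 from by omega] at this
      have hsplit : g * (p * v) * g⁻¹ = (g * p * g⁻¹) * (g * v * g⁻¹) := by group
      rw [show n + 1 + m + 1 = (n + m + 1) + 1 from by omega, hsplit]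
      exact Set.mul_mem_mul h1 h2

theorem conj_W_shift (mono : Monotone S) (hφ : ∀ k, Adm S t k (φ k)) {g : G} {m : ℕ}
    (hg : g ∈ S m) {z : G} (hz : z ∈ W (shift (S := S) φ m)) : g * z * g⁻¹ ∈ W φ := by
  rcases Set.mem_iUnion.1 hz with ⟨n, hn⟩
  exact Set.mem_iUnion.2 ⟨n + m + 1, conj_P_shift mono hφ hg n z hn⟩

end shift

section half

/-- From an invariant symmetric open neighborhood datum in `S n`, produce an admissible set. -/
theorem adm_of_SIN (n : ℕ) {U : Set (S n)} (hUo : @IsOpen _ (t n) U) (hU1 : (1 : S n) ∈ U)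
    (hUinv : U⁻¹ = U) (hUconj : ∀ g : S n, (fun x => g * x * g⁻¹) '' U = U) :
    Adm S t n ((Subtype.val : S n → G) '' U) := by
  constructor
  · rintro x ⟨a, _, rfl⟩; exact a.2
  · exact ⟨1, hU1, rfl⟩
  · rintro v ⟨a, ha, rfl⟩
    refine ⟨a⁻¹, ?_, rfl⟩
    rw [← hUinv]
    simpa using ha
  · rintro g hg v ⟨a, ha, rfl⟩
    refine ⟨⟨g, hg⟩ * a * ⟨g, hg⟩⁻¹, ?_, rfl⟩
    rw [← hUconj ⟨g, hg⟩]
    exact ⟨a, ha, rfl⟩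
  · rw [Set.preimage_image_eq _ Subtype.val_injective]
    exact hUo

theorem exists_half (htg : ∀ n, @IsTopologicalGroup (S n) (t n) _)
    (hSIN : ∀ n, ∀ W ∈ @nhds _ (t n) (1 : S n), ∃ U : Set (S n),
      U ⊆ W ∧ @IsOpen _ (t n) U ∧ (1 : S n) ∈ U ∧ U⁻¹ = U ∧
      ∀ g : S n, (fun x => g * x * g⁻¹) '' U = U)
    (n : ℕ) {V : Set G} (hV : Adm S t n V) :
    ∃ V', Adm S t n V' ∧ V' ⊆ V ∧ ∀ a ∈ V', ∀ b ∈ V', a * b ∈ V := by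
  letI := t n
  haveI := htg n
  set U : Set (S n) := (Subtype.val : S n → G) ⁻¹' V with hU
  have hUnhds : U ∈ 𝓝 (1 : S n) := hV.isOpen.mem_nhds hV.one_mem
  obtain ⟨U₂, hU₂nhds, hU₂⟩ := exists_nhds_one_split hUnhds
  obtain ⟨U₃, hU₃sub, hU₃o, hU₃1, hU₃inv, hU₃conj⟩ := hSIN n U₂ hU₂nhds
  refine ⟨(Subtype.val : S n → G) '' U₃, adm_of_SIN n hU₃o hU₃1 hU₃inv hU₃conj, ?_, ?_⟩
  · rintro v ⟨a, ha, rfl⟩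
    have : a ∈ U := by
      have h1 : a * 1 ∈ U := hU₂ a (hU₃sub ha) 1 (hU₃sub hU₃1)
      simpa using h1
    exact this
  · rintro v ⟨a, ha, rfl⟩ w ⟨b, hb, rfl⟩
    have : a * b ∈ U := hU₂ a (hU₃sub ha) b (hU₃sub hb)
    have h2 : ((a * b : S n) : G) ∈ V := this
    simpa using h2

/-- A "half sequence": `ψ` admissible with `ψ k * ψ k ⊆ φ k`. -/
theorem exists_halfSeq (htg : ∀ n, @IsTopologicalGroup (S n) (t n) _)
    (hSIN : ∀ n, ∀ W ∈ @nhds _ (t n) (1 : S n), ∃ U : Set (S n),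
      U ⊆ W ∧ @IsOpen _ (t n) U ∧ (1 : S n) ∈ U ∧ U⁻¹ = U ∧
      ∀ g : S n, (fun x => g * x * g⁻¹) '' U = U)
    {φ : ℕ → Set G} (hφ : ∀ k, Adm S t k (φ k)) :
    ∃ ψ : ℕ → Set G, (∀ k, Adm S t k (ψ k)) ∧ (∀ k, ψ k ⊆ φ k) ∧
      ∀ k, ∀ a ∈ ψ k, ∀ b ∈ ψ k, a * b ∈ φ k := by
  choose ψ h1 h2 h3 using fun k => exists_half (S := S) (t := t) htg hSIN k (hφ k)
  exact ⟨ψ, h1, h2, h3⟩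

end half


section colim

theorem adm_restrict (mono : Monotone S)
    (hcompat_t : ∀ n, t n =
      TopologicalSpace.induced (⇑(Subgroup.inclusion (mono (Nat.le_succ n)))) (t (n + 1)))
    {N k : ℕ} (hkN : k ≤ N) {T : Set G} (hT : Adm S t N T) :
    Adm S t k (T ∩ (S k : Set G)) := by
  refine ⟨Set.inter_subset_right, ⟨hT.one_mem, one_mem _⟩,
    fun v hv => ⟨hT.inv_mem v hv.1, inv_mem hv.2⟩,
    fun g hg v hv => ⟨hT.conj_mem g (mono hkN hg) v hv.1,
      mul_mem (mul_mem hg hv.2) (inv_mem hg)⟩, ?_⟩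
  have h1 : ((Subtype.val : S k → G) ⁻¹' (T ∩ (S k : Set G))) =
      ((Subtype.val : S k → G) ⁻¹' T) := by
    ext x
    exact ⟨fun hx => hx.1, fun hx => ⟨hx, x.2⟩⟩
  rw [h1]
  exact open_transfer mono hcompat_t hkN hT.isOpen

variable (S t) in
/-- The index type of admissible sequences. -/
def Idx : Type u := {φ : ℕ → Set G // ∀ n, Adm S t n (φ n)}

theorem adm_top (n : ℕ) : Adm S t n ((S n : Set G)) := by
  refine ⟨le_refl _, one_mem _, fun v hv => inv_mem hv,
    fun g hg v hv => mul_mem (mul_mem hg hv) (inv_mem hg), ?_⟩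
  have : ((Subtype.val : S n → G) ⁻¹' (S n : Set G)) = Set.univ :=
    Set.eq_univ_of_forall fun x => x.2
  rw [this]
  exact @isOpen_univ _ (t n)

instance : Nonempty (Idx S t) := ⟨⟨fun n => (S n : Set G), fun n => adm_top n⟩⟩

variable (S t) in
/-- The filter of the colimit uniformity. -/
def colimF : Filter (G × G) := ⨅ φ : Idx S t, 𝓟 (Ent φ.1)

theorem Ent_mono {φ ψ : ℕ → Set G} (hsub : ∀ k, ψ k ⊆ φ k) : Ent ψ ⊆ Ent φ :=
  fun _ hp => W_mono_pointwise hsub hp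

theorem colimF_hasBasis :
    (colimF S t).HasBasis (fun _ : Idx S t => True) (fun φ => Ent φ.1) := by
  refine hasBasis_iInf_principal ?_
  intro φ ψ
  refine ⟨⟨fun k => φ.1 k ∩ ψ.1 k, fun k => (φ.2 k).inter (ψ.2 k)⟩,
    Ent_mono fun k => Set.inter_subset_left, Ent_mono fun k => Set.inter_subset_right⟩

theorem Ent_mem_colimF (φ : Idx S t) : Ent φ.1 ∈ colimF S t :=
  mem_iInf_of_mem φ (mem_principal_self _)

variable (S t) in
/-- The colimit uniform structure on `G`. -/
noncomputable def UC (mono : Monotone S) (htg : ∀ n, @IsTopologicalGroup (S n) (t n) _)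
    (hSIN : ∀ n, ∀ W ∈ @nhds _ (t n) (1 : S n), ∃ U : Set (S n),
      U ⊆ W ∧ @IsOpen _ (t n) U ∧ (1 : S n) ∈ U ∧ U⁻¹ = U ∧
      ∀ g : S n, (fun x => g * x * g⁻¹) '' U = U) : UniformSpace G :=
  UniformSpace.ofCore
  { uniformity := colimF S t
    refl := le_iInf fun φ => principal_mono.2 <| by
      rintro ⟨a, b⟩ h
      have hab : a = b := h
      subst hab
      show a * a⁻¹ ∈ W φ.1
      simpa using one_mem_W φ.2
    symm := by
      rw [colimF, tendsto_iInf]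
      intro φ
      rw [tendsto_principal]
      refine Filter.mem_of_superset (Ent_mem_colimF φ) ?_
      rintro ⟨a, b⟩ hp
      show b * a⁻¹ ∈ W φ.1
      have h2 := W_inv mono φ.2 hp
      rwa [mul_inv_rev, inv_inv] at h2
    comp := le_iInf fun φ => le_principal_iff.2 <| by
      obtain ⟨ψ, hψA, _, hψm⟩ := exists_halfSeq htg hSIN φ.2
      have hmem : ((Ent ψ : Set (G × G)) ○ (Ent ψ)) ∈
          (colimF S t).lift' (fun s => s ○ s) :=
        Filter.mem_lift' (Ent_mem_colimF ⟨ψ, hψA⟩)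
      refine Filter.mem_of_superset hmem ?_
      rintro ⟨a, c⟩ ⟨b, h1, h2⟩
      show a * c⁻¹ ∈ W φ.1
      have h1' : a * b⁻¹ ∈ W ψ := h1
      have h2' : b * c⁻¹ ∈ W ψ := h2
      rw [show a * c⁻¹ = (a * b⁻¹) * (b * c⁻¹) from by group]
      exact W_mul mono hψA φ.2 hψm h1' h2' }

variable (S t) in
theorem UC_uniformity (mono : Monotone S) (htg : ∀ n, @IsTopologicalGroup (S n) (t n) _)
    (hSIN : ∀ n, ∀ W ∈ @nhds _ (t n) (1 : S n), ∃ U : Set (S n),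
      U ⊆ W ∧ @IsOpen _ (t n) U ∧ (1 : S n) ∈ U ∧ U⁻¹ = U ∧
      ∀ g : S n, (fun x => g * x * g⁻¹) '' U = U) :
    𝓤[UC S t mono htg hSIN] = colimF S t := rfl

variable (S t) in
theorem UC_nhds_basis (mono : Monotone S) (htg : ∀ n, @IsTopologicalGroup (S n) (t n) _)
    (hSIN : ∀ n, ∀ W ∈ @nhds _ (t n) (1 : S n), ∃ U : Set (S n),
      U ⊆ W ∧ @IsOpen _ (t n) U ∧ (1 : S n) ∈ U ∧ U⁻¹ = U ∧
      ∀ g : S n, (fun x => g * x * g⁻¹) '' U = U) (x : G) :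
    (@nhds G (UC S t mono htg hSIN).toTopologicalSpace x).HasBasis
      (fun _ : Idx S t => True) (fun φ => {y : G | y * x⁻¹ ∈ W φ.1}) := by
  have h1 : @nhds G (UC S t mono htg hSIN).toTopologicalSpace x =
      (colimF S t).comap (Prod.mk x) := @nhds_eq_comap_uniformity G (UC S t mono htg hSIN) x
  rw [h1]
  refine (colimF_hasBasis.comap (Prod.mk x)).congr (fun _ => Iff.rfl) ?_
  intro φ _
  ext y
  show x * y⁻¹ ∈ W φ.1 ↔ y * x⁻¹ ∈ W φ.1
  constructor
  · intro h
    have := W_inv mono φ.2 h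
    rwa [mul_inv_rev, inv_inv] at this
  · intro h
    have := W_inv mono φ.2 h
    rwa [mul_inv_rev, inv_inv] at this

variable (S t) in
theorem UC_topologicalGroup (mono : Monotone S) (hunion : ∀ x : G, ∃ n, x ∈ S n)
    (htg : ∀ n, @IsTopologicalGroup (S n) (t n) _)
    (hcompat_t : ∀ n, t n =
      TopologicalSpace.induced (⇑(Subgroup.inclusion (mono (Nat.le_succ n)))) (t (n + 1)))
    (hSIN : ∀ n, ∀ W ∈ @nhds _ (t n) (1 : S n), ∃ U : Set (S n),
      U ⊆ W ∧ @IsOpen _ (t n) U ∧ (1 : S n) ∈ U ∧ U⁻¹ = U ∧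
      ∀ g : S n, (fun x => g * x * g⁻¹) '' U = U) :
    @IsTopologicalGroup G (UC S t mono htg hSIN).toTopologicalSpace _ := by
  letI := (UC S t mono htg hSIN).toTopologicalSpace
  have hnb : ∀ x : G, (𝓝 x).HasBasis (fun _ : Idx S t => True)
      (fun φ => {y : G | y * x⁻¹ ∈ W φ.1}) := UC_nhds_basis S t mono htg hSIN
  have hnb1 : (𝓝 (1 : G)).HasBasis (fun _ : Idx S t => True) (fun φ => W φ.1) := by
    refine (hnb 1).congr (fun _ => Iff.rfl) ?_
    intro φ _
    ext y
    simp
  refine IsTopologicalGroup.of_nhds_one ?_ ?_ ?_ ?_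
  · rw [(hnb1.prod_self).tendsto_iff hnb1]
    intro χ _
    obtain ⟨ψ, hψA, _, hψm⟩ := exists_halfSeq htg hSIN χ.2
    refine ⟨⟨ψ, hψA⟩, trivial, ?_⟩
    rintro ⟨a, b⟩ hp
    exact W_mul mono hψA χ.2 hψm hp.1 hp.2
  · rw [hnb1.tendsto_iff hnb1]
    intro φ _
    exact ⟨φ, trivial, fun w hw => W_inv mono φ.2 hw⟩
  · intro x₀
    obtain ⟨m, hm⟩ := hunion x₀
    refine (hnb x₀).ext (hnb1.map (x₀ * ·)) ?_ ?_
    · intro φ _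
      refine ⟨⟨shift (S := S) φ.1 m, shift_adm mono hcompat_t φ.2 m⟩, trivial, ?_⟩
      rintro _ ⟨w, hw, rfl⟩
      show (x₀ * w) * x₀⁻¹ ∈ W φ.1
      rw [show (x₀ * w) * x₀⁻¹ = x₀ * w * x₀⁻¹ from by group]
      exact conj_W_shift mono φ.2 hm hw
    · intro ψ _
      refine ⟨⟨shift (S := S) ψ.1 m, shift_adm mono hcompat_t ψ.2 m⟩, trivial, ?_⟩
      intro y hy
      have hw : y * x₀⁻¹ ∈ W (shift (S := S) ψ.1 m) := hy
      have hconj : x₀⁻¹ * (y * x₀⁻¹) * x₀ ∈ W ψ.1 := by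
        have := conj_W_shift mono ψ.2 (inv_mem hm) hw
        rwa [inv_inv] at this
      exact ⟨x₀⁻¹ * (y * x₀⁻¹) * x₀, hconj, by group⟩
  · intro x₀
    obtain ⟨m, hm⟩ := hunion x₀
    rw [hnb1.tendsto_iff hnb1]
    intro φ _
    exact ⟨⟨shift (S := S) φ.1 m, shift_adm mono hcompat_t φ.2 m⟩, trivial,
      fun w hw => conj_W_shift mono φ.2 hm hw⟩

end colim

end SIN11

/-- Let `(X_n)` be an increasing sequence of subgroups of a group `G` with union `G`, each a
SIN topological group, each a topological subgroup of the next one, carrying its two-sided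
uniformity.  Then the topology of the uniform direct limit `u-lim X_n` coincides with the
topology of the group direct limit `g-lim X_n`: it turns `G` into a topological group, makes
all inclusions `X_n → G` continuous, and is the strongest (finest) such topology; in
particular the identity map `u-lim X_n → g-lim X_n` is a homeomorphism. -/
theorem statement11 {G : Type u} [Group G] (S : ℕ → Subgroup G)
    (mono : Monotone S) (hunion : ∀ x : G, ∃ n, x ∈ S n)
    (t : (n : ℕ) → TopologicalSpace (S n))
    (htg : ∀ n, @IsTopologicalGroup (S n) (t n) _)
    (hcompat_t : ∀ n, t n =
      TopologicalSpace.induced (⇑(Subgroup.inclusion (mono (Nat.le_succ n)))) (t (n + 1)))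
    (hSIN : ∀ n, ∀ W ∈ @nhds _ (t n) (1 : S n), ∃ U : Set (S n),
      U ⊆ W ∧ @IsOpen _ (t n) U ∧ (1 : S n) ∈ U ∧ U⁻¹ = U ∧
      ∀ g : S n, (fun x => g * x * g⁻¹) '' U = U)
    (u : (n : ℕ) → UniformSpace (S n))
    (htop : ∀ n, (u n).toTopologicalSpace = t n)
    (hbasis : ∀ n, (@uniformity _ (u n)).HasBasis
      (fun U : Set (S n) => @IsOpen _ (t n) U ∧ (1 : S n) ∈ U ∧ U⁻¹ = U)
      (fun U => {p : S n × S n | p.2⁻¹ * p.1 ∈ U ∧ p.1 * p.2⁻¹ ∈ U}))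
    (hcompat_u : ∀ n, u n =
      UniformSpace.comap (⇑(Subgroup.inclusion (mono (Nat.le_succ n)))) (u (n + 1))) :
    @IsTopologicalGroup G
        (uDirLim (fun n => (S n : Set G)) u).toTopologicalSpace _ ∧
      (∀ n, @Continuous _ _ (t n)
        (uDirLim (fun n => (S n : Set G)) u).toTopologicalSpace
        (fun x : S n => (x : G))) ∧
      ∀ t' : TopologicalSpace G, @IsTopologicalGroup G t' _ →
        (∀ n, @Continuous _ _ (t n) t' (fun x : S n => (x : G))) →
        (uDirLim (fun n => (S n : Set G)) u).toTopologicalSpace ≤ t' := by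
  classical
  set UCc : UniformSpace G := SIN11.UC S t mono htg hSIN with hUCc
  -- UCc makes all inclusions uniformly continuous
  have hUCmem : ∀ n, @UniformContinuous _ _ (u n) UCc (Subtype.val : S n → G) := by
    intro n
    have hT : Tendsto (fun p : (↥(S n)) × (↥(S n)) => ((p.1 : G), (p.2 : G)))
        (𝓤[u n]) (SIN11.colimF S t) := by
      rw [SIN11.colimF, tendsto_iInf]
      intro φ
      rw [tendsto_principal]
      have hbmem : {p : ↥(S n) × ↥(S n) |
            p.2⁻¹ * p.1 ∈ ((Subtype.val : S n → G) ⁻¹' φ.1 n) ∧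
            p.1 * p.2⁻¹ ∈ ((Subtype.val : S n → G) ⁻¹' φ.1 n)} ∈ 𝓤[u n] := by
        refine (hbasis n).mem_of_mem ⟨(φ.2 n).isOpen, ?_, ?_⟩
        · show ((1 : ↥(S n)) : G) ∈ φ.1 n
          simpa using (φ.2 n).one_mem
        · ext a
          simp only [Set.mem_inv, Set.mem_preimage]
          constructor
          · intro h
            have h2 := (φ.2 n).inv_mem _ h
            simpa using h2
          · intro h
            simpa using (φ.2 n).inv_mem _ h
      refine Filter.mem_of_superset hbmem ?_
      rintro ⟨a, b⟩ ⟨_, h2⟩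
      show ((a : G)) * ((b : G))⁻¹ ∈ SIN11.W φ.1
      have h3 : ((a * b⁻¹ : ↥(S n)) : G) ∈ φ.1 n := h2
      push_cast at h3
      exact SIN11.subset_W φ.2 n h3
    exact hT
  have hUCinS : UCc ∈ {u' : UniformSpace G |
      ∀ n, @UniformContinuous _ _ (u n) u' (Subtype.val : ((fun n => ((S n : Subgroup G) : Set G)) n) → G)} :=
    fun n => hUCmem n
  have tle : (uDirLim (fun n => (S n : Set G)) u).toTopologicalSpace ≤
      UCc.toTopologicalSpace :=
    UniformSpace.toTopologicalSpace_mono (sInf_le hUCinS)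
  -- the hard direction
  have tge : UCc.toTopologicalSpace ≤
      (uDirLim (fun n => (S n : Set G)) u).toTopologicalSpace := by
    unfold uDirLim
    rw [UniformSpace.toTopologicalSpace_sInf]
    refine le_iInf fun u' => le_iInf fun hu' => ?_
    refine le_of_nhds_le_nhds fun x => ?_
    refine Filter.le_def.2 fun O hO => ?_
    rcases (@UniformSpace.mem_nhds_iff G u' x O).1 hO with ⟨E, hE, hballE⟩
    obtain ⟨m, hxm⟩ := hunion x
    -- a fast-decreasing sequence of entourages of u'
    obtain ⟨seq, hseq0, hseqU, hseqC⟩ :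
        ∃ seq : ℕ → Set (G × G), seq 0 = E ∧ (∀ k, seq k ∈ 𝓤[u']) ∧
          ∀ k, (seq (k+1) ○ seq (k+1)) ⊆ seq k := by
      have hcomp : ∀ A : {A : Set (G × G) // A ∈ 𝓤[u']},
          ∃ B ∈ 𝓤[u'], (B ○ B) ⊆ A.1 := fun A => @comp_mem_uniformity_sets G u' A.1 A.2
      choose B hBU hBC using hcomp
      let g : ℕ → {A : Set (G × G) // A ∈ 𝓤[u']} := fun k =>
        Nat.rec ⟨E, hE⟩ (fun _ p => ⟨B p, hBU p⟩) k
      exact ⟨fun k => (g k).1, rfl, fun k => (g k).2, fun k => hBC (g k)⟩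
    have hseqM : ∀ k, seq (k+1) ⊆ seq k := by
      rintro k ⟨a, b⟩ hp
      exact hseqC k ⟨b, hp, @refl_mem_uniformity G u' b _ (hseqU (k+1))⟩
    -- telescoping composition
    have tele : ∀ n j (a : ℕ → G), (∀ k ≤ n, (a k, a (k+1)) ∈ seq (j+k+1)) →
        (a 0, a (n+1)) ∈ seq j := by
      intro n
      induction n with
      | zero =>
          intro j a h
          exact hseqM j (h 0 le_rfl)
      | succ n ih =>
          intro j a h
          have h1 : (a 0, a 1) ∈ seq (j+1) := h 0 (by omega)
          have h2 : (a 1, a (n+2)) ∈ seq (j+1) := by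
            refine ih (j+1) (fun k => a (k+1)) (fun k hk => ?_)
            have := h (k+1) (by omega)
            rwa [show j+(k+1)+1 = (j+1)+k+1 from by omega] at this
          exact hseqC j ⟨a 1, h1, h2⟩
    -- invariant neighborhoods tied to the entourages
    have hT : ∀ k, ∃ T : Set G, SIN11.Adm S t (max k m) T ∧
        ∀ a b : G, a ∈ S (max k m) → b ∈ S (max k m) → b * a⁻¹ ∈ T →
          (a, b) ∈ seq (k+1) := by
      intro k
      have hpre : (fun p : (↥(S (max k m))) × (↥(S (max k m))) =>
          ((p.1 : G), (p.2 : G))) ⁻¹' (seq (k+1)) ∈ 𝓤[u (max k m)] :=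
        mem_map.1 ((hu' (max k m)) (hseqU (k+1)))
      rcases (hbasis (max k m)).mem_iff.1 hpre with ⟨U, ⟨hUo, hU1, hUinv⟩, hUsub⟩
      have hUnhds : U ∈ @nhds _ (t (max k m)) (1 : ↥(S (max k m))) := by
        letI := t (max k m); exact hUo.mem_nhds hU1
      obtain ⟨U', hU'sub, hU'o, hU'1, hU'inv, hU'conj⟩ := hSIN (max k m) U hUnhds
      refine ⟨(Subtype.val : S (max k m) → G) '' U',
        SIN11.adm_of_SIN (max k m) hU'o hU'1 hU'inv hU'conj, ?_⟩
      intro a b ha hb hba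
      rcases hba with ⟨δ, hδ, hδeq⟩
      have hδinv : δ⁻¹ ∈ U' := by
        rw [← hU'inv]
        simpa using hδ
      set α : ↥(S (max k m)) := ⟨a, ha⟩ with hα
      set β : ↥(S (max k m)) := ⟨b, hb⟩ with hβd
      have hβ : β = δ * α := by
        apply Subtype.ext
        show b = (δ : G) * a
        rw [hδeq]; group
      have h1 : α * β⁻¹ ∈ U' := by
        have he : α * β⁻¹ = δ⁻¹ := by rw [hβ]; group
        rw [he]; exact hδinv
      have h2 : β⁻¹ * α ∈ U' := by
        have he : β⁻¹ * α = α⁻¹ * δ⁻¹ * α⁻¹⁻¹ := by rw [hβ]; group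
        rw [he, ← hU'conj α⁻¹]
        exact ⟨δ⁻¹, hδinv, rfl⟩
      exact hUsub (show (α, β) ∈ _ from ⟨hU'sub h2, hU'sub h1⟩)
    choose T hTAdm hTkey using hT
    set φ : ℕ → Set G := fun k => T k ∩ (S k : Set G) with hφdef
    have hφA : ∀ k, SIN11.Adm S t k (φ k) := fun k =>
      SIN11.adm_restrict mono hcompat_t (le_max_left k m) (hTAdm k)
    -- decompose elements of the products into chains
    have hdecomp : ∀ n, ∀ p ∈ SIN11.P φ n, ∃ a : ℕ → G, a 0 = x ∧ a (n+1) = p * x ∧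
        ∀ k ≤ n, (a k, a (k+1)) ∈ seq (k+1) := by
      intro n
      induction n with
      | zero =>
          intro p hp
          refine ⟨fun k => if k = 0 then x else p * x, by simp, by simp, ?_⟩
          intro k hk
          have hk0 : k = 0 := Nat.le_zero.1 hk
          subst hk0
          show (x, p * x) ∈ seq (0 + 1)
          refine hTkey 0 x (p * x) (mono (le_max_right 0 m) hxm) ?_ ?_
          · exact mul_mem (mono (le_max_left 0 m) hp.2) (mono (le_max_right 0 m) hxm)
          · rw [show p * x * x⁻¹ = p from by group]
            exact hp.1
      | succ n ih =>
          intro p hp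
          rcases Set.mem_mul.1 hp with ⟨q, hq, v, hv, rfl⟩
          obtain ⟨a, ha0, han, hach⟩ := ih q hq
          have hqS : q ∈ (S n : Set G) := SIN11.P_subset_S mono hφA n hq
          refine ⟨fun k => if k = n + 2 then q * v * x else a k, ?_, ?_, ?_⟩
          · exact ha0
          · simp
          · intro k hk
            by_cases hkn : k ≤ n
            · have h1 : ¬ (k = n + 2) := by omega
              have h2 : ¬ (k + 1 = n + 2) := by omega
              simp only [h1, h2, if_false, ite_false, if_neg h1, if_neg h2]
              exact hach k hkn
            · have hk1 : k = n + 1 := by omega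
              subst hk1
              have hne : ¬ (n + 1 = n + 2) := by omega
              simp only [if_neg hne, if_pos rfl, han]
              have hqN : q ∈ S (max (n+1) m) := mono (by omega : n ≤ max (n+1) m) hqS
              have hvN : v ∈ S (max (n+1) m) :=
                mono (le_max_left (n+1) m) ((hφA (n+1)).subset hv)
              have hxN : x ∈ S (max (n+1) m) := mono (le_max_right (n+1) m) hxm
              refine hTkey (n+1) (q * x) (q * v * x) (mul_mem hqN hxN)
                (mul_mem (mul_mem hqN hvN) hxN) ?_
              rw [show q * v * x * (q * x)⁻¹ = q * v * q⁻¹ from by group]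
              exact (hTAdm (n+1)).conj_mem q hqN v hv.1
    -- conclude
    have hEnt : SIN11.Ent φ ∈ 𝓤[UCc] :=
      SIN11.Ent_mem_colimF (⟨φ, hφA⟩ : SIN11.Idx S t)
    refine (@UniformSpace.mem_nhds_iff G UCc x O).2 ⟨SIN11.Ent φ, hEnt, ?_⟩
    intro y hy
    have hy1 : x * y⁻¹ ∈ SIN11.W φ := hy
    have hy2 : y * x⁻¹ ∈ SIN11.W φ := by
      have := SIN11.W_inv mono hφA hy1
      rwa [mul_inv_rev, inv_inv] at this
    rcases Set.mem_iUnion.1 hy2 with ⟨n, hn⟩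
    obtain ⟨a, ha0, han, hach⟩ := hdecomp n _ hn
    have hfin : (a 0, a (n+1)) ∈ seq 0 :=
      tele n 0 a (fun k hk => by rw [Nat.zero_add]; exact hach k hk)
    rw [ha0, han, hseq0] at hfin
    have hyO : y ∈ UniformSpace.ball x E := by
      have : y * x⁻¹ * x = y := by group
      rw [← this]
      exact hfin
    exact hballE hyO
  have teq : (uDirLim (fun n => (S n : Set G)) u).toTopologicalSpace =
      UCc.toTopologicalSpace := le_antisymm tle tge
  refine ⟨?_, ?_, ?_⟩
  · rw [teq]
    exact SIN11.UC_topologicalGroup S t mono hunion htg hcompat_t hSIN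
  · intro n
    rw [← htop n]
    have huc : @UniformContinuous _ _ (u n) (uDirLim (fun n => (S n : Set G)) u)
        (Subtype.val : S n → G) := by
      unfold uDirLim
      exact uniformContinuous_sInf_rng.2 fun u' hu' => hu' n
    exact @UniformContinuous.continuous _ _ (u n) (uDirLim (fun n => (S n : Set G)) u) _ huc
  · intro t' htg' hcont
    rw [teq]
    refine le_of_nhds_le_nhds fun x => ?_
    refine Filter.le_def.2 fun O hO => ?_
    obtain ⟨m, hxm⟩ := hunion x
    -- pull O back to a neighborhood of 1 in t'
    have hOx : (fun z : G => z * x) ⁻¹' O ∈ @nhds G t' (1 : G) := by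
      letI := t'
      haveI := htg'
      have hc : Continuous (fun z : G => z * x) := continuous_id.mul continuous_const
      have hca := hc.continuousAt (x := (1 : G))
      rw [ContinuousAt, one_mul] at hca
      exact mem_map.1 (hca hO)
    -- splitting chain of neighborhoods of 1 in t'
    obtain ⟨Nc, hNc0, hNcnh, hNcsplit⟩ :
        ∃ Nc : ℕ → Set G, Nc 0 ⊆ (fun z : G => z * x) ⁻¹' O ∧
          (∀ k, Nc k ∈ @nhds G t' 1) ∧
          ∀ k, ∀ a ∈ Nc (k+1), ∀ b ∈ Nc (k+1), a * b ∈ Nc k := by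
      letI := t'
      haveI := htg'
      have hsplit : ∀ A : {A : Set G // A ∈ 𝓝 (1 : G)},
          ∃ B ∈ 𝓝 (1 : G), ∀ a ∈ B, ∀ b ∈ B, a * b ∈ A.1 :=
        fun A => exists_nhds_one_split A.2
      choose B hBnh hBs using hsplit
      let g : ℕ → {A : Set G // A ∈ 𝓝 (1 : G)} := fun k =>
        Nat.rec ⟨(fun z : G => z * x) ⁻¹' O, hOx⟩ (fun _ p => ⟨B p, hBnh p⟩) k
      exact ⟨fun k => (g k).1, le_refl _, fun k => (g k).2, fun k => hBs (g k)⟩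
    -- admissible sets inside the chain
    have hφex : ∀ k, ∃ Vk : Set G, SIN11.Adm S t k Vk ∧ Vk ⊆ Nc (k+1) := by
      intro k
      have hpre : (fun a : ↥(S k) => (a : G)) ⁻¹' (Nc (k+1)) ∈
          @nhds _ (t k) (1 : ↥(S k)) := by
        have hck := hcont k
        have hca : @ContinuousAt _ _ (t k) t' (fun a : ↥(S k) => (a : G)) 1 :=
          @Continuous.continuousAt _ _ (t k) t' _ _ hck
        rw [ContinuousAt] at hca
        have h1 : ((1 : ↥(S k)) : G) = (1 : G) := rfl
        rw [h1] at hca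
        exact mem_map.1 (hca (hNcnh (k+1)))
      obtain ⟨U', hU'sub, hU'o, hU'1, hU'inv, hU'conj⟩ := hSIN k _ hpre
      refine ⟨(Subtype.val : S k → G) '' U',
        SIN11.adm_of_SIN k hU'o hU'1 hU'inv hU'conj, ?_⟩
      rintro v ⟨a, ha, rfl⟩
      exact hU'sub ha
    choose φ hφA hφN using hφex
    -- products stay in Nc 0
    have hkey : ∀ n, ∀ p ∈ SIN11.P φ n, ∀ z ∈ Nc (n+1), p * z ∈ Nc 0 := by
      intro n
      induction n with
      | zero =>
          intro p hp z hz
          exact hNcsplit 0 p (hφN 0 hp) z hz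
      | succ n ih =>
          intro p hp z hz
          rcases Set.mem_mul.1 hp with ⟨q, hq, v, hv, rfl⟩
          have h1 : v * z ∈ Nc (n+1) := hNcsplit (n+1) v (hφN (n+1) hv) z hz
          rw [show q * v * z = q * (v * z) from by group]
          exact ih q hq (v * z) h1
    have honeN : ∀ n, (1 : G) ∈ Nc (n+1) := fun n => by
      letI := t'
      exact mem_of_mem_nhds (hNcnh (n+1))
    have hEnt : SIN11.Ent φ ∈ 𝓤[UCc] :=
      SIN11.Ent_mem_colimF (⟨φ, hφA⟩ : SIN11.Idx S t)
    refine (@UniformSpace.mem_nhds_iff G UCc x O).2 ⟨SIN11.Ent φ, hEnt, ?_⟩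
    intro y hy
    have hy1 : x * y⁻¹ ∈ SIN11.W φ := hy
    have hy2 : y * x⁻¹ ∈ SIN11.W φ := by
      have := SIN11.W_inv mono hφA hy1
      rwa [mul_inv_rev, inv_inv] at this
    rcases Set.mem_iUnion.1 hy2 with ⟨n, hn⟩
    have hNc : y * x⁻¹ * 1 ∈ Nc 0 := hkey n _ hn 1 (honeN n)
    rw [mul_one] at hNc
    have h2 : y * x⁻¹ * x ∈ O := hNc0 hNc
    have he : y * x⁻¹ * x = y := by group
    rwa [he] at h2
end

section
/- Let (X_n)_{n∈ω} be a tower of uniform spaces such that each X_n is locally compact (in the topology induced by its uniformity). Then the identity map t-lim X_n → u-lim X_n is a homeomorphism; that is, the topology of the uniform direct limit u-lim X_n coincides with the final topology on X = ⋃_n X_n with respect to the inclusions X_n → X. -/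
open Set Filter Topology

universe u

/-- A tower of uniform spaces on the ambient set `X`: an increasing sequence
`S 0 ⊆ S 1 ⊆ ⋯` of subsets covering `X`, each `S n` carrying a uniformity which is
the subspace uniformity inherited from `S (n+1)`. -/
structure UniformTower (X : Type u) where
  S : ℕ → Set X
  mono : Monotone S
  iUnion_eq : ⋃ n, S n = Set.univ
  u : (n : ℕ) → UniformSpace (S n)
  compat : ∀ n, u n = UniformSpace.comap (Set.inclusion (mono (Nat.le_succ n))) (u (n + 1))

namespace UniformTower

variable {X : Type u} (T : UniformTower X)

/-- The uniform direct limit: the strongest (finest) uniformity on `X` making all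
the identity inclusions `S n → X` uniformly continuous. -/
noncomputable def dirLim : UniformSpace X :=
  sInf {u' : UniformSpace X |
    ∀ n, @UniformContinuous _ _ (T.u n) u' (Subtype.val : T.S n → X)}

/-- The height `|x| = min {n : x ∈ S n}` of a point of `X`. -/
noncomputable def height (x : X) : ℕ := sInf {n | x ∈ T.S n}

lemma mem_S_height (x : X) : x ∈ T.S (T.height x) := by
  have hx : x ∈ ⋃ n, T.S n := T.iUnion_eq ▸ Set.mem_univ x
  rcases Set.mem_iUnion.mp hx with ⟨n, hn⟩
  exact Nat.sInf_mem ⟨n, show n ∈ {m | x ∈ T.S m} from hn⟩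

/-- Given a sequence of pseudometrics `d n` on the stages `S n`, the distance
`d_{|x,y|}(x,y)` where `|x,y| = max (|x|, |y|)`. -/
noncomputable def chainD (d : (n : ℕ) → T.S n → T.S n → ℝ) (x y : X) : ℝ :=
  d (max (T.height x) (T.height y))
    ⟨x, T.mono (le_max_left _ _) (T.mem_S_height x)⟩
    ⟨y, T.mono (le_max_right _ _) (T.mem_S_height y)⟩

/-- The limit pseudometric `lim d_n` of a sequence of pseudometrics:
`lim d_n (x,y) = inf { Σ_{i=1}^m d_{|x_{i-1},x_i|}(x_{i-1},x_i) : x = x_0, x_1, …, x_m = y }`. -/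
noncomputable def limD (d : (n : ℕ) → T.S n → T.S n → ℝ) (x y : X) : ℝ :=
  sInf {r : ℝ | ∃ (m : ℕ) (c : ℕ → X), c 0 = x ∧ c m = y ∧
    r = ∑ i ∈ Finset.range m, T.chainD d (c i) (c (i + 1))}

/-- A sequence of pseudometrics on the stages of the tower is monotone if
`d n ≤ d (n+1)` on `S n × S n`. -/
def MonotoneSeq (d : (n : ℕ) → T.S n → T.S n → ℝ) : Prop :=
  ∀ n (x y : T.S n),
    d n x y ≤ d (n + 1) (Set.inclusion (T.mono (Nat.le_succ n)) x)
      (Set.inclusion (T.mono (Nat.le_succ n)) y)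

end UniformTower

/-- `d` is a pseudometric: it vanishes on the diagonal, is symmetric and satisfies
the triangle inequality. -/
def IsPseudometric {α : Type*} (d : α → α → ℝ) : Prop :=
  (∀ x, d x x = 0) ∧ (∀ x y, d x y = d y x) ∧ (∀ x y z, d x z ≤ d x y + d y z)

/-- `d` is a uniform pseudometric on the uniform space `(α, u)`:
for every `ε > 0` the set `{d < ε}` is an entourage. -/
def IsUniformPseudometric {α : Type*} (u : UniformSpace α) (d : α → α → ℝ) : Prop :=
  IsPseudometric d ∧ ∀ ε : ℝ, 0 < ε → {p : α × α | d p.1 p.2 < ε} ∈ @uniformity α u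


open Metric Uniformity NNReal Function
open scoped SetRel

section AuxProofs
variable {X : Type u}


private lemma abs_max_zero_sub (a b : ℝ) : |max 0 a - max 0 b| ≤ |a - b| := by
  rcases le_total a 0 with ha | ha <;> rcases le_total b 0 with hb | hb
  · rw [max_eq_left ha, max_eq_left hb]; simp [abs_nonneg]
  · rw [max_eq_left ha, max_eq_right hb, zero_sub, abs_neg, abs_of_nonneg hb,
      abs_of_nonpos (by linarith : a - b ≤ 0)]; linarith
  · rw [max_eq_right ha, max_eq_left hb, sub_zero, abs_of_nonneg ha,
      abs_of_nonneg (by linarith : (0:ℝ) ≤ a - b)]; linarith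
  · rw [max_eq_right ha, max_eq_right hb]

private lemma abs_min_one_sub (a b : ℝ) : |min 1 a - min 1 b| ≤ |a - b| := by
  have h : ∀ x : ℝ, min 1 x = 1 - max 0 (1 - x) := by
    intro x
    rcases le_total x 1 with h | h
    · rw [min_eq_right h, max_eq_right (by linarith)]; ring
    · rw [min_eq_left h, max_eq_left (by linarith)]; ring
  rw [h a, h b, show (1 - max 0 (1-a)) - (1 - max 0 (1-b))
      = -(max 0 (1-a) - max 0 (1-b)) by ring, abs_neg]
  calc |max 0 (1-a) - max 0 (1-b)| ≤ |(1-a) - (1-b)| := abs_max_zero_sub _ _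
    _ = |a - b| := by rw [show (1-a) - (1-b) = -(a-b) by ring, abs_neg]

lemma metric_core {M : Type u} [PseudoMetricSpace M] (f : M → ℝ) (s K : Set M)
    (hKs : K ⊆ s) (hKne : K.Nonempty)
    (hf0 : ∀ a ∈ s, 0 ≤ f a) (hf1 : ∀ a ∈ s, f a ≤ 1)
    (hsupp : ∀ a ∈ s, f a ≠ 0 → a ∈ K)
    (hlip : ∀ a ∈ s, ∀ b ∈ s, |f a - f b| ≤ 4 * dist a b) :
    ∃ G : M → ℝ, (∀ a ∈ s, G a = f a) ∧ (∀ y, 0 ≤ G y) ∧ (∀ y, G y ≤ 1) ∧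
      (∀ y z, |G y - G z| ≤ 20 * dist y z) ∧
      (∀ y, G y ≠ 0 → ∃ c ∈ K, dist y c < 1/8) := by
  have hlipON : LipschitzOnWith 4 f s := by
    rw [lipschitzOnWith_iff_dist_le_mul]
    intro x hx y hy
    simpa [Real.dist_eq] using hlip x hx y hy
  obtain ⟨g', hg'lip, hg'eq⟩ := hlipON.extend_real
  have hg'dist : ∀ y z : M, |g' y - g' z| ≤ 4 * dist y z := by
    intro y z
    have := hg'lip.dist_le_mul y z
    simpa [Real.dist_eq] using this
  set G : M → ℝ := fun y => max 0 (min 1 (g' y - 16 * infDist y K)) with hG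
  have hinf0 : ∀ y, 0 ≤ infDist y K := fun y => infDist_nonneg
  refine ⟨G, ?_, ?_, ?_, ?_, ?_⟩
  · intro a ha
    by_cases h : f a = 0
    · have hga : g' a = 0 := (hg'eq ha).symm.trans h
      have hle : g' a - 16 * infDist a K ≤ 0 := by rw [hga]; nlinarith [hinf0 a]
      simp only [hG]
      rw [max_eq_left (le_trans (min_le_right _ _) hle), h]
    · have haK : a ∈ K := hsupp a ha h
      have hia : infDist a K = 0 := infDist_zero_of_mem haK
      simp only [hG, hia, mul_zero, sub_zero, ← hg'eq ha]
      rw [min_eq_right (hf1 a ha), max_eq_right (hf0 a ha)]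
  · intro y; exact le_max_left _ _
  · intro y; exact max_le zero_le_one (min_le_left _ _)
  · intro y z
    calc |G y - G z| ≤ |min 1 (g' y - 16 * infDist y K) - min 1 (g' z - 16 * infDist z K)| :=
          abs_max_zero_sub _ _
      _ ≤ |(g' y - 16 * infDist y K) - (g' z - 16 * infDist z K)| := abs_min_one_sub _ _
      _ ≤ |g' y - g' z| + 16 * |infDist y K - infDist z K| := by
          rw [show (g' y - 16 * infDist y K) - (g' z - 16 * infDist z K)
            = (g' y - g' z) + 16*(-(infDist y K - infDist z K)) by ring]
          calc _ ≤ |g' y - g' z| + |16*(-(infDist y K - infDist z K))| := abs_add_le _ _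
            _ = _ := by rw [abs_mul, abs_neg]; norm_num
      _ ≤ 4 * dist y z + 16 * dist y z := by
          have h2 : |infDist y K - infDist z K| ≤ dist y z := by
            rw [abs_sub_le_iff]
            constructor
            · have := infDist_le_infDist_add_dist (x := y) (y := z) (s := K); linarith
            · have := infDist_le_infDist_add_dist (x := z) (y := y) (s := K)
              rw [dist_comm] at this; linarith
          have h1 := hg'dist y z
          linarith
      _ = 20 * dist y z := by ring
  · intro y hGy
    have hkey : 16 * infDist y K < g' y := by
      by_contra h
      push_neg at h
      have h1 : min 1 (g' y - 16 * infDist y K) ≤ 0 := le_trans (min_le_right _ _) (by linarith)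
      exact hGy (max_eq_left h1)
    have hkey2 : ∀ δ : ℝ, infDist y K < δ → g' y < 1 + 4 * δ := by
      intro δ hδ
      obtain ⟨c, hcK, hc⟩ := (infDist_lt_iff hKne).1 hδ
      have h1 : g' y - g' c ≤ 4 * dist y c := le_trans (le_abs_self _) (hg'dist y c)
      have h2 : g' c ≤ 1 := (hg'eq (hKs hcK)).symm.trans_le (hf1 c (hKs hcK))
      nlinarith
    by_contra h
    push_neg at h
    have hinf : (1/8:ℝ) ≤ infDist y K := by
      by_contra hc
      push_neg at hc
      obtain ⟨c, hcK, hdc⟩ := (infDist_lt_iff hKne).1 hc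
      exact absurd hdc (not_lt.2 (h c hcK))
    have hδ : infDist y K < (g' y - 1)/4 := by linarith
    have := hkey2 _ hδ
    linarith

structure PState (Y : Type u) (uY : UniformSpace Y) (O : Set Y) where
  g : Y → ℝ
  d : Y → Y → ℝ
  K : Set Y
  hd1 : ∀ x y, d x y ≤ 1
  compat : ∀ ε : ℝ, 0 < ε → {p : Y × Y | d p.1 p.2 < ε} ∈ @uniformity Y uY
  lip : ∀ x y, |g x - g y| ≤ d x y
  g0 : ∀ x, 0 ≤ g x
  g1 : ∀ x, g x ≤ 1
  cpt : @IsCompact Y uY.toTopologicalSpace K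
  Kne : K.Nonempty
  KO : K ⊆ O
  supp : ∀ x, g x ≠ 0 → x ∈ K

lemma core {Y Z : Type u} [uY : UniformSpace Y] [uZ : UniformSpace Z]
    (hlc : @LocallyCompactSpace Y uY.toTopologicalSpace)
    (O : Set Y) (hO : IsOpen O)
    (ι : Z → Y) (hinj : Function.Injective ι) (hcomap : uZ = uY.comap ι)
    (σ : PState Z uZ (ι ⁻¹' O)) :
    ∃ τ : PState Y uY O, ∀ z, τ.g (ι z) = σ.g z := by
  classical
  haveI := hlc
  subst hcomap
  letI instZ : UniformSpace Z := uY.comap ι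
  have hιuc : UniformContinuous ι := uniformContinuous_comap
  have hKYcpt : IsCompact (ι '' σ.K) := σ.cpt.image hιuc.continuous
  have hKYne : (ι '' σ.K).Nonempty := σ.Kne.image ι
  have hKYO : ι '' σ.K ⊆ O := by
    rintro y ⟨z, hz, rfl⟩; exact σ.KO hz
  obtain ⟨L, hLcpt, hKYint, hLO⟩ := exists_compact_between hKYcpt hO hKYO
  obtain ⟨E₀, hE₀mem, hE₀sub⟩ :
      ∃ E₀ ∈ 𝓤 Y, (⋃ x ∈ ι '' σ.K, UniformSpace.ball x E₀) ⊆ interior L := by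
    have hbasis := IsCompact.nhdsSet_basis_uniformity ((𝓤 Y).basis_sets) hKYcpt
    exact hbasis.mem_iff.1 (isOpen_interior.mem_nhdsSet.2 hKYint)
  have htr : ∀ ε : ℝ, 0 < ε → ∃ W ∈ 𝓤 Y, ∀ z z' : Z, (ι z, ι z') ∈ W → σ.d z z' < ε := by
    intro ε hε
    have h1 := σ.compat ε hε
    rw [uniformity_comap ι] at h1
    obtain ⟨W, hW, hWsub⟩ := Filter.mem_comap.1 h1
    exact ⟨W, hW, fun z z' hz => hWsub (show (z, z') ∈ Prod.map ι ι ⁻¹' W from hz)⟩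
  have hex : ∀ (k : ℕ) (W : Set (Y × Y)), ∃ W' : Set (Y × Y), W ∈ 𝓤 Y →
      (W' ∈ 𝓤 Y ∧ SetRel.IsSymm W' ∧ W' ○ (W' ○ W') ⊆ W ∧ W' ⊆ E₀ ∧
        ∀ z z' : Z, (ι z, ι z') ∈ W' → σ.d z z' ≤ (1/2 : ℝ)^(k+1)) := by
    intro k W
    by_cases hW : W ∈ 𝓤 Y
    · obtain ⟨Wd, hWd, hWdtr⟩ := htr ((1/2 : ℝ)^(k+1)) (by positivity)
      have hT : W ∩ E₀ ∩ Wd ∈ 𝓤 Y := inter_mem (inter_mem hW hE₀mem) hWd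
      obtain ⟨W1, hW1, hW1sym, hW1comp⟩ := comp_symm_mem_uniformity_sets hT
      obtain ⟨W2, hW2, hW2sym, hW2comp⟩ := comp_symm_mem_uniformity_sets hW1
      have h3 : W1 ⊆ W ∩ E₀ ∩ Wd := (subset_comp_self_of_mem_uniformity hW1).trans hW1comp
      refine ⟨W1 ∩ W2, fun _ => ⟨inter_mem hW1 hW2, ?_, ?_, ?_, ?_⟩⟩
      · haveI := hW1sym; haveI := hW2sym; infer_instance
      · have h1 : (W1 ∩ W2) ○ ((W1 ∩ W2) ○ (W1 ∩ W2)) ⊆ W1 ○ (W2 ○ W2) :=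
          SetRel.comp_subset_comp inter_subset_left (SetRel.comp_subset_comp inter_subset_right inter_subset_right)
        refine h1.trans ?_
        have h2 : W1 ○ (W2 ○ W2) ⊆ W1 ○ W1 := SetRel.comp_subset_comp (subset_refl _) hW2comp
        exact h2.trans (hW1comp.trans (fun p hp => hp.1.1))
      · exact fun p hp => (h3 hp.1).1.2
      · exact fun z z' hz => le_of_lt (hWdtr z z' (h3 hz.1).2)
    · exact ⟨univ, fun h => absurd h hW⟩
  choose F hF using hex
  have hF' : ∀ k (W : Set (Y × Y)), W ∈ 𝓤 Y →
      (F k W ∈ 𝓤 Y ∧ SetRel.IsSymm (F k W) ∧ F k W ○ (F k W ○ F k W) ⊆ W ∧ F k W ⊆ E₀ ∧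
        ∀ z z' : Z, (ι z, ι z') ∈ F k W → σ.d z z' ≤ (1/2 : ℝ)^(k+1)) := fun k W h => hF k W h
  set V : ℕ → Set (Y × Y) := fun n => Nat.rec univ (fun k Vk => F k Vk) n with hVdef
  have hV0 : V 0 = univ := rfl
  have hVsucc : ∀ k, V (k+1) = F k (V k) := fun _ => rfl
  have hVmem : ∀ k, V k ∈ 𝓤 Y := by
    intro k
    induction k with
    | zero => exact univ_mem
    | succ k ih => rw [hVsucc]; exact (hF' k (V k) ih).1
  have hVsym : ∀ k, SetRel.IsSymm (V k) := by
    intro k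
    cases k with
    | zero =>
      rw [hV0]; exact SetRel.isSymm_univ
    | succ k => rw [hVsucc]; exact (hF' k (V k) (hVmem k)).2.1
  have hVcomp : ∀ k, V (k+1) ○ (V (k+1) ○ V (k+1)) ⊆ V k := by
    intro k; rw [hVsucc]; exact (hF' k (V k) (hVmem k)).2.2.1
  have hVE : ∀ k, V (k+1) ⊆ E₀ := by
    intro k; rw [hVsucc]; exact (hF' k (V k) (hVmem k)).2.2.2.1
  have hVtr : ∀ (k : ℕ) (z z' : Z), (ι z, ι z') ∈ V k → σ.d z z' ≤ (1/2 : ℝ)^k := by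
    intro k
    cases k with
    | zero => intro z z' _; simpa using σ.hd1 z z'
    | succ k =>
      intro z z' hz
      rw [hVsucc] at hz
      exact (hF' k (V k) (hVmem k)).2.2.2.2 z z' hz
  have hanti : Antitone V := by
    refine antitone_nat_of_succ_le fun k => ?_
    intro p hp
    exact hVcomp k ⟨p.1, refl_mem_uniformity (hVmem (k+1)),
      p.1, refl_mem_uniformity (hVmem (k+1)), hp⟩
  set d₀ : Y → Y → ℝ≥0 := fun x y =>
    if h : ∃ n, (x, y) ∉ V n then (1/2 : ℝ≥0)^(Nat.find h) else 0 with hd₀def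
  have hr : (1/2 : ℝ≥0) ∈ Set.Ioo (0:ℝ≥0) 1 :=
    ⟨half_pos one_pos, NNReal.half_lt_self one_ne_zero⟩
  have hd₀self : ∀ x, d₀ x x = 0 := by
    intro x
    have hne : ¬∃ n, (x, x) ∉ V n := by
      push_neg; exact fun n => refl_mem_uniformity (hVmem n)
    simp only [hd₀def]
    exact dif_neg hne
  have hd₀symm : ∀ x y, d₀ x y = d₀ y x := by
    intro x y
    simp only [hd₀def, fun n => (haveI := hVsym n; SetRel.comm (R := V n) (a := x) (b := y))]
  have hle_d : ∀ {x y : Y} {n : ℕ}, (1/2 : ℝ≥0)^n ≤ d₀ x y ↔ (x, y) ∉ V n := by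
    intro x y n
    simp only [hd₀def]
    split_ifs with h
    · rw [(pow_right_strictAnti₀ hr.1 hr.2).le_iff_ge, Nat.find_le_iff]
      exact ⟨fun ⟨m, hmn, hm⟩ hn => hm (hanti hmn hn), fun h' => ⟨n, le_rfl, h'⟩⟩
    · push_neg at h
      simp [h n, (pow_pos hr.1 n).not_ge]
  have hd4 : ∀ x₁ x₂ x₃ x₄ : Y,
      d₀ x₁ x₄ ≤ 2 * max (d₀ x₁ x₂) (max (d₀ x₂ x₃) (d₀ x₃ x₄)) := by
    intro x₁ x₂ x₃ x₄
    by_cases H : ∃ n, (x₁, x₄) ∉ V n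
    · refine (dif_pos H).trans_le ?_
      rw [← div_le_iff₀' zero_lt_two, ← mul_one_div ((1/2:ℝ≥0) ^ _), ← pow_succ]
      simp only [le_max_iff, hle_d, ← not_and_or]
      rintro ⟨h₁₂, h₂₃, h₃₄⟩
      refine Nat.find_spec H (hVcomp (Nat.find H) ?_)
      exact ⟨x₂, h₁₂, x₃, h₂₃, h₃₄⟩
    · exact (dif_neg H).trans_le zero_le
    -- the chain pseudometric
  set Ips : PseudoMetricSpace Y := PseudoMetricSpace.ofPreNNDist d₀ hd₀self hd₀symm with hIps
  set D : Y → Y → ℝ := fun x y => @dist Y (@PseudoMetricSpace.toDist Y Ips) x y with hDdef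
  have hDled₀ : ∀ x y, D x y ≤ (d₀ x y : ℝ) :=
    fun x y => PseudoMetricSpace.dist_ofPreNNDist_le d₀ hd₀self hd₀symm x y
  have hd₀leD : ∀ x y, (d₀ x y : ℝ) ≤ 2 * D x y :=
    fun x y => PseudoMetricSpace.le_two_mul_dist_ofPreNNDist d₀ hd₀self hd₀symm hd4 x y
  have hDnonneg : ∀ x y, 0 ≤ D x y := fun x y => @dist_nonneg Y Ips x y
  have hmemV_d₀lt : ∀ (x y : Y) (k : ℕ), (x, y) ∈ V k → d₀ x y < (1/2 : ℝ≥0)^k := by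
    intro x y k hmem
    by_contra hc
    push_neg at hc
    exact (hle_d.1 hc) hmem
  have hd₀lt_memV : ∀ (x y : Y) (k : ℕ), d₀ x y < (1/2 : ℝ≥0)^k → (x, y) ∈ V k := by
    intro x y k h
    by_contra hc
    exact absurd (hle_d.2 hc) (not_le.2 h)
  -- trace Lipschitz bound
  have htrace : ∀ z z' : Z, σ.d z z' ≤ 4 * D (ι z) (ι z') := by
    intro z z'
    by_cases h : ∃ n, (ι z, ι z') ∉ V n
    · have hd₀eq : d₀ (ι z) (ι z') = (1/2 : ℝ≥0)^(Nat.find h) := dif_pos h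
      have hk0 : Nat.find h ≠ 0 := by
        intro h0
        have hspec := Nat.find_spec h
        rw [h0, hV0] at hspec
        exact hspec (mem_univ _)
      obtain ⟨k', hk'⟩ : ∃ k', Nat.find h = k' + 1 :=
        ⟨Nat.find h - 1, (Nat.succ_pred_eq_of_pos (Nat.pos_of_ne_zero hk0)).symm⟩
      have hmem : (ι z, ι z') ∈ V k' := by
        by_contra hc
        exact Nat.find_min h (by omega) hc
      have h1 : σ.d z z' ≤ (1/2 : ℝ)^k' := hVtr k' z z' hmem
      have h2 : ((d₀ (ι z) (ι z') : ℝ≥0) : ℝ) = (1/2 : ℝ)^(k'+1) := by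
        rw [hd₀eq, hk']
        push_cast
        norm_num
      have h3 := hd₀leD (ι z) (ι z')
      rw [h2] at h3
      have h4 : (1/2 : ℝ)^k' = 2 * (1/2 : ℝ)^(k'+1) := by ring
      linarith [h1, h3]
    · push_neg at h
      have h1 : ∀ n : ℕ, σ.d z z' ≤ (1/2 : ℝ)^n := fun n => hVtr n z z' (h n)
      have h2 : σ.d z z' ≤ 0 :=
        ge_of_tendsto' (tendsto_pow_atTop_nhds_zero_of_lt_one (by norm_num) (by norm_num)) h1
      linarith [hDnonneg (ι z) (ι z')]
  -- apply the metric extension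
  set f : Y → ℝ := Function.extend ι σ.g 0 with hfdef
  have hfeq : ∀ z : Z, f (ι z) = σ.g z := fun z => hinj.extend_apply σ.g 0 z
  obtain ⟨G, hGeq, hG0, hG1, hGlip, hGsupp⟩ :=
    @metric_core Y Ips f (Set.range ι) (ι '' σ.K)
      (by rintro y ⟨z, _, rfl⟩; exact mem_range_self z)
      hKYne
      (by rintro a ⟨z, rfl⟩; rw [hfeq]; exact σ.g0 z)
      (by rintro a ⟨z, rfl⟩; rw [hfeq]; exact σ.g1 z)
      (by rintro a ⟨z, rfl⟩ hfa; rw [hfeq] at hfa; exact ⟨z, σ.supp z hfa, rfl⟩)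
      (by
        rintro a ⟨z, rfl⟩ b ⟨z', rfl⟩
        rw [hfeq, hfeq]
        exact le_trans (σ.lip z z') (htrace z z'))
  refine ⟨⟨G, fun y z => min 1 (20 * D y z), L, ?_, ?_, ?_, hG0, hG1, hLcpt, ?_, hLO, ?_⟩, ?_⟩
  · exact fun x y => min_le_left _ _
  · -- compat
    intro ε hε
    obtain ⟨k, hk⟩ := exists_pow_lt_of_lt_one (show (0:ℝ) < ε/20 by linarith)
      (show (1/2 : ℝ) < 1 by norm_num)
    refine Filter.mem_of_superset (hVmem k) ?_
    rintro ⟨y, z⟩ hyz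
    have h1 : d₀ y z < (1/2 : ℝ≥0)^k := hmemV_d₀lt y z k hyz
    have h2 : ((d₀ y z : ℝ≥0) : ℝ) < (1/2 : ℝ)^k := by
      have := (NNReal.coe_lt_coe).2 h1
      rwa [NNReal.coe_pow, NNReal.coe_div, NNReal.coe_one, NNReal.coe_two] at this
    have h3 : D y z < (1/2 : ℝ)^k := lt_of_le_of_lt (hDled₀ y z) h2
    show min 1 (20 * D y z) < ε
    calc min 1 (20 * D y z) ≤ 20 * D y z := min_le_right _ _
      _ < 20 * (1/2 : ℝ)^k := by linarith [h3]
      _ < 20 * (ε/20) := by linarith [hk]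
      _ = ε := by ring
  · -- lip
    intro x y
    refine le_min ?_ (hGlip x y)
    rw [abs_sub_le_iff]
    constructor <;> linarith [hG0 x, hG1 x, hG0 y, hG1 y]
  · -- L nonempty
    exact hKYne.mono (hKYint.trans interior_subset)
  · -- support
    intro y hGy
    obtain ⟨c, hcK, hdc⟩ := hGsupp y hGy
    have h1 : D y c < 1/8 := hdc
    have h2 : (d₀ y c : ℝ) < 1/4 := lt_of_le_of_lt (hd₀leD y c) (by linarith)
    have h3 : d₀ y c < (1/2 : ℝ≥0)^1 := by
      rw [← NNReal.coe_lt_coe]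
      push_cast
      linarith
    have h4 : (y, c) ∈ V 1 := hd₀lt_memV y c 1 h3
    have h5 : (c, y) ∈ V 1 := (haveI := hVsym 1; SetRel.symm (V 1) h4)
    have h6 : y ∈ UniformSpace.ball c E₀ := hVE 0 h5
    have h7 : y ∈ ⋃ x ∈ ι '' σ.K, UniformSpace.ball x E₀ :=
      Set.mem_biUnion hcK h6
    exact interior_subset (hE₀sub h7)
  · -- coherence
    intro z
    show G (ι z) = σ.g z
    rw [hGeq (ι z) (mem_range_self z), hfeq]


lemma UniformTower.uc_inclusion (T : UniformTower X) {a b : ℕ} (h : a ≤ b) :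
    @UniformContinuous _ _ (T.u a) (T.u b) (Set.inclusion (T.mono h)) := by
  induction b, h using Nat.le_induction with
  | base =>
    have heq : Set.inclusion (T.mono (le_refl a)) = id := funext fun x => rfl
    rw [heq]
    exact @uniformContinuous_id _ (T.u a)
  | succ n hmn ih =>
    have hcomp : Set.inclusion (T.mono (Nat.le_succ_of_le hmn))
        = (Set.inclusion (T.mono (Nat.le_succ n))) ∘ (Set.inclusion (T.mono hmn)) :=
      funext fun x => rfl
    have h1 : @UniformContinuous _ _ (T.u n) (T.u (n+1))
        (Set.inclusion (T.mono (Nat.le_succ n))) := by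
      rw [T.compat n]
      exact @uniformContinuous_comap _ _ (Set.inclusion (T.mono (Nat.le_succ n))) (T.u (n+1))
    have h2 := @UniformContinuous.comp _ _ _ (T.u a) (T.u n) (T.u (n+1)) _ _ h1 ih
    rw [← hcomp] at h2
    exact h2

lemma UniformTower.exists_good (T : UniformTower X)
    (hlc : ∀ n, @LocallyCompactSpace (T.S n) (T.u n).toTopologicalSpace)
    (U : Set X)
    (hU : ∀ n, @IsOpen _ (T.u n).toTopologicalSpace ((Subtype.val : T.S n → X) ⁻¹' U))
    (x₀ : X) (hx₀ : x₀ ∈ U) :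
    ∃ g : X → ℝ, g x₀ = 1 ∧ (∀ y, y ∉ U → g y = 0) ∧
      ∀ n, @UniformContinuous _ _ (T.u n) _ (fun a : T.S n => g a.1) := by
  classical
  set m := T.height x₀ with hmdef
  have hm : x₀ ∈ T.S m := T.mem_S_height x₀
  have hbase : ∃ τ : PState (T.S m) (T.u m) ((Subtype.val : T.S m → X) ⁻¹' U),
      τ.g ⟨x₀, hm⟩ = 1 := by
    have hinj : Function.Injective (fun _ : PUnit.{u+1} => (⟨x₀, hm⟩ : T.S m)) :=
      fun a b _ => Subsingleton.elim a b
    obtain ⟨τ, hτ⟩ := @core (T.S m) PUnit.{u+1} (T.u m)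
      (UniformSpace.comap (fun _ : PUnit.{u+1} => (⟨x₀, hm⟩ : T.S m)) (T.u m))
      (hlc m) _ (hU m) (fun _ => ⟨x₀, hm⟩) hinj rfl
      { g := fun _ => 1
        d := fun _ _ => 0
        K := Set.univ
        hd1 := fun _ _ => zero_le_one
        compat := fun ε hε => Filter.mem_of_superset Filter.univ_mem (fun p _ => hε)
        lip := fun _ _ => by norm_num
        g0 := fun _ => zero_le_one
        g1 := fun _ => le_refl 1
        cpt := @Set.Finite.isCompact PUnit
          ((UniformSpace.comap (fun _ : PUnit.{u+1} => (⟨x₀, hm⟩ : T.S m))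
            (T.u m)).toTopologicalSpace) Set.univ Set.finite_univ
        Kne := ⟨PUnit.unit, trivial⟩
        KO := fun a _ => hx₀
        supp := fun a _ => trivial }
    exact ⟨τ, hτ PUnit.unit⟩
  obtain ⟨τ₀, hτ₀⟩ := hbase
  have hstep : ∀ (n : ℕ)
      (σ : PState (T.S (m+n)) (T.u (m+n)) ((Subtype.val : T.S (m+n) → X) ⁻¹' U)),
      ∃ τ : PState (T.S (m+n+1)) (T.u (m+n+1)) ((Subtype.val : T.S (m+n+1) → X) ⁻¹' U),
        ∀ z, τ.g (Set.inclusion (T.mono (Nat.le_succ (m+n))) z) = σ.g z := by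
    intro n σ
    exact @core (T.S (m+n+1)) (T.S (m+n)) (T.u (m+n+1)) (T.u (m+n)) (hlc (m+n+1)) _
      (hU (m+n+1)) (Set.inclusion (T.mono (Nat.le_succ (m+n)))) (Set.inclusion_injective _)
      (T.compat (m+n)) σ
  choose stepF hstepF using hstep
  let St : ∀ n : ℕ, PState (T.S (m+n)) (T.u (m+n)) ((Subtype.val : T.S (m+n) → X) ⁻¹' U) :=
    fun n => Nat.rec τ₀ (fun n σ => stepF n σ) n
  have hcoh : ∀ (n : ℕ) (z : T.S (m+n)),
      (St (n+1)).g (Set.inclusion (T.mono (Nat.le_succ (m+n))) z) = (St n).g z :=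
    fun n z => hstepF n (St n) z
  have hSt_congr : ∀ (a b : ℕ) (h : a = b) (x : X) (h1 : x ∈ T.S (m+a)) (h2 : x ∈ T.S (m+b)),
      (St a).g ⟨x, h1⟩ = (St b).g ⟨x, h2⟩ := by
    intro a b h x h1 h2
    subst h
    rfl
  have hcross : ∀ (k n : ℕ) (x : X) (hx : x ∈ T.S (m+n)) (hx' : x ∈ T.S (m+(n+k))),
      (St (n+k)).g ⟨x, hx'⟩ = (St n).g ⟨x, hx⟩ := by
    intro k
    induction k with
    | zero => intro n x hx hx'; rfl
    | succ k ih =>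
      intro n x hx hx'
      have hxk : x ∈ T.S (m+(n+k)) := T.mono (by omega) hx
      have h1 : (St (n+k+1)).g (Set.inclusion (T.mono (Nat.le_succ (m+(n+k)))) ⟨x, hxk⟩)
          = (St (n+k)).g ⟨x, hxk⟩ := hcoh (n+k) ⟨x, hxk⟩
      have h2 : (St (n+(k+1))).g ⟨x, hx'⟩ = (St (n+k)).g ⟨x, hxk⟩ := h1
      rw [h2]
      exact ih n x hx hxk
  have hex2 : ∀ x : X, ∃ n, x ∈ T.S (m+n) := by
    intro x
    have hx : x ∈ ⋃ n, T.S n := T.iUnion_eq ▸ Set.mem_univ x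
    rcases Set.mem_iUnion.mp hx with ⟨j, hj⟩
    exact ⟨j, T.mono (Nat.le_add_left j m) hj⟩
  choose idx hidx using hex2
  set g : X → ℝ := fun x => (St (idx x)).g ⟨x, hidx x⟩ with hgdef
  have heval : ∀ (n : ℕ) (x : X) (hx : x ∈ T.S (m+n)), g x = (St n).g ⟨x, hx⟩ := by
    intro n x hx
    obtain ⟨k, hk⟩ : ∃ k, idx x + k = max (idx x) n :=
      ⟨_, Nat.add_sub_cancel' (le_max_left _ _)⟩
    obtain ⟨k', hk'⟩ : ∃ k', n + k' = max (idx x) n :=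
      ⟨_, Nat.add_sub_cancel' (le_max_right _ _)⟩
    have hmem1 : x ∈ T.S (m + (idx x + k)) := T.mono (by omega) (hidx x)
    have hmem2 : x ∈ T.S (m + (n + k')) := T.mono (by omega) hx
    have e1 : (St (idx x + k)).g ⟨x, hmem1⟩ = (St (idx x)).g ⟨x, hidx x⟩ :=
      hcross k (idx x) x (hidx x) hmem1
    have e2 : (St (n + k')).g ⟨x, hmem2⟩ = (St n).g ⟨x, hx⟩ :=
      hcross k' n x hx hmem2
    have e3 : (St (idx x + k)).g ⟨x, hmem1⟩ = (St (n + k')).g ⟨x, hmem2⟩ :=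
      hSt_congr _ _ (by omega) x hmem1 hmem2
    show (St (idx x)).g ⟨x, hidx x⟩ = (St n).g ⟨x, hx⟩
    rw [← e1, e3, e2]
  refine ⟨g, ?_, ?_, ?_⟩
  · have h := heval 0 x₀ hm
    rw [h]
    exact hτ₀
  · intro y hy
    by_contra hne
    have h1 : g y ≠ 0 := hne
    rw [heval (idx y) y (hidx y)] at h1
    have h2 := (St (idx y)).supp _ h1
    exact hy ((St (idx y)).KO h2)
  · intro n
    have hsub : T.S n ⊆ T.S (m+n) := T.mono (Nat.le_add_left n m)
    have heq : (fun a : T.S n => g a.1) = ((St n).g) ∘ (Set.inclusion hsub) := by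
      funext a
      exact heval n a.1 (hsub a.2)
    rw [heq]
    have hUCg : @UniformContinuous _ _ (T.u (m+n)) _ ((St n).g) := by
      have htd : Filter.Tendsto
          (fun p : (T.S (m+n)) × (T.S (m+n)) => ((St n).g p.1, (St n).g p.2))
          (@uniformity _ (T.u (m+n))) (uniformity ℝ) := by
        rw [Metric.uniformity_basis_dist.tendsto_right_iff]
        intro ε hε
        refine Filter.eventually_iff.2 (Filter.mem_of_superset ((St n).compat ε hε) ?_)
        intro p hp
        show dist _ _ < ε
        rw [Real.dist_eq]
        exact lt_of_le_of_lt ((St n).lip p.1 p.2) hp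
      exact htd
    exact @UniformContinuous.comp _ _ _ (T.u n) (T.u (m+n)) _ _ _ hUCg
      (T.uc_inclusion (Nat.le_add_left n m))

end AuxProofs

/-- If every stage `X_n` of a tower of uniform spaces is locally compact (in the topology
induced by its uniformity), then the identity map `t-lim X_n → u-lim X_n` is a homeomorphism:
the topology of the uniform direct limit coincides with the final topology (the strongest
topology making all inclusions `X_n → X` continuous). -/
theorem statement14 {X : Type u} (T : UniformTower X)
    (hlc : ∀ n, @LocallyCompactSpace (T.S n) (T.u n).toTopologicalSpace) :
    T.dirLim.toTopologicalSpace =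
      ⨆ n, TopologicalSpace.coinduced (Subtype.val : T.S n → X)
        (T.u n).toTopologicalSpace := by
  classical
  refine le_antisymm ?_ ?_
  · rw [TopologicalSpace.le_def]
    intro U hUopen
    have hU : ∀ n, @IsOpen _ (T.u n).toTopologicalSpace ((Subtype.val : T.S n → X) ⁻¹' U) := by
      intro n
      have h1 := (@isOpen_iSup_iff X ℕ
        (fun n => TopologicalSpace.coinduced (Subtype.val : T.S n → X)
          (T.u n).toTopologicalSpace) U).1 hUopen n
      exact (@isOpen_coinduced _ _ (T.u n).toTopologicalSpace U _).1 h1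
    rw [@isOpen_iff_mem_nhds X T.dirLim.toTopologicalSpace U]
    intro x hx
    obtain ⟨g, hg1, hg0, hgUC⟩ := T.exists_good hlc U hU x hx
    have hadm : (UniformSpace.comap g inferInstance : UniformSpace X) ∈
        {u' : UniformSpace X | ∀ n, @UniformContinuous _ _ (T.u n) u' (Subtype.val : T.S n → X)} := by
      intro n
      exact @uniformContinuous_comap' (T.S n) ℝ X g Subtype.val _ (T.u n) (hgUC n)
    have hle : T.dirLim ≤ UniformSpace.comap g inferInstance := sInf_le hadm
    have hnhds : U ∈ @nhds X (UniformSpace.comap g inferInstance :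
        UniformSpace X).toTopologicalSpace x := by
      have hteq : (UniformSpace.comap g inferInstance : UniformSpace X).toTopologicalSpace
          = TopologicalSpace.induced g (inferInstance : TopologicalSpace ℝ) :=
        UniformSpace.toTopologicalSpace_comap
      rw [hteq, mem_nhds_induced]
      refine ⟨Metric.ball (g x) 1, Metric.ball_mem_nhds _ one_pos, ?_⟩
      intro y hy
      by_contra hyU
      have h0 : g y = 0 := hg0 y hyU
      have h2 : dist (g y) (g x) < 1 := hy
      rw [h0, hg1, Real.dist_eq] at h2
      norm_num at h2
    exact _root_.nhds_mono (UniformSpace.toTopologicalSpace_mono hle) hnhds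
  · refine iSup_le fun n => ?_
    have hUC : @UniformContinuous _ _ (T.u n) T.dirLim (Subtype.val : T.S n → X) :=
      (@uniformContinuous_sInf_rng _ _ (Subtype.val : T.S n → X) (T.u n) _).2
        (fun u' hu' => hu' n)
    have hcont : @Continuous _ _ (T.u n).toTopologicalSpace T.dirLim.toTopologicalSpace
        (Subtype.val : T.S n → X) :=
      @UniformContinuous.continuous _ _ (T.u n) T.dirLim _ hUC
    exact (@continuous_iff_coinduced_le _ _ _ (T.u n).toTopologicalSpace
      T.dirLim.toTopologicalSpace).1 hcont
end

section
/- Let (X_n, *_n)_{n∈ω} be a sequence of pointed uniform spaces. The identity map from the small box-product ⊡_{n∈ω} X_n to the uniform direct limit u-lim ⊡_{i≤n} X_i is a homeomorphism, where ⊡_{i≤n} X_i = ∏_{i≤n} X_i is identified with the subspace {(x_i)_{i∈ω} ∈ ⊡_{i∈ω} X_i : x_i = *_i for all i > n} and carries the product uniformity, so that (⊡_{i≤n} X_i)_{n∈ω} is a tower of uniform spaces whose union is ⊡_{n∈ω} X_n. -/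
open Set Filter Topology

universe u


/-- The small box-product of a sequence of pointed spaces: the set of all sequences
`(x_i)` with `x_i ≠ *_i` for only finitely many `i`. -/
abbrev SmallBox (X : ℕ → Type u) (pt : (i : ℕ) → X i) : Type u :=
  {f : (i : ℕ) → X i // {i | f i ≠ pt i}.Finite}

/-- The uniformity of the small box-product, inherited from the box uniformity `ubox`
of the full product. -/
noncomputable def smallBoxUniformity (X : ℕ → Type u) (pt : (i : ℕ) → X i)
    (ubox : UniformSpace ((i : ℕ) → X i)) : UniformSpace (SmallBox X pt) :=
  UniformSpace.comap Subtype.val ubox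

/-- The `n`-th stage `⊡_{i ≤ n} X_i = ∏_{i ≤ n} X_i` of the tower, identified with the
subspace `{(x_i) ∈ ⊡_i X_i : x_i = *_i for all i > n}` of the small box-product. -/
def boxStage (X : ℕ → Type u) (pt : (i : ℕ) → X i) (n : ℕ) : Set (SmallBox X pt) :=
  {f | ∀ i, n < i → f.val i = pt i}

/-- The uniformity of the `n`-th stage, the subspace uniformity inherited from the small
box-product; under the identification `⊡_{i ≤ n} X_i = ∏_{i ≤ n} X_i` it is the product
uniformity. -/
noncomputable def boxStageUniformity (X : ℕ → Type u) (pt : (i : ℕ) → X i)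
    (ubox : UniformSpace ((i : ℕ) → X i)) (n : ℕ) :
    UniformSpace (boxStage X pt n) :=
  UniformSpace.comap Subtype.val (smallBoxUniformity X pt ubox)

section aux

variable {α : Type*}

/-- Build a sequence of entourages with `F 0 = E` and `F (k+1) ○ F (k+1) ⊆ F k`. -/
lemma exists_entourage_seq (v : UniformSpace α) {E : Set (α × α)}
    (hE : E ∈ @uniformity _ v) :
    ∃ F : ℕ → Set (α × α), F 0 = E ∧ (∀ k, F k ∈ @uniformity _ v) ∧
      ∀ k, SetRel.comp (F (k + 1)) (F (k + 1)) ⊆ F k := by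
  have h : ∀ p : {V : Set (α × α) // V ∈ @uniformity _ v},
      ∃ q : {V : Set (α × α) // V ∈ @uniformity _ v}, SetRel.comp q.1 q.1 ⊆ p.1 := by
    rintro ⟨V, hV⟩
    obtain ⟨V', h1, h2⟩ := @comp_mem_uniformity_sets _ v _ hV
    exact ⟨⟨V', h1⟩, h2⟩
  choose g hg using h
  let F' : ℕ → {V : Set (α × α) // V ∈ @uniformity _ v} :=
    fun k => Nat.rec (⟨E, hE⟩ : {V : Set (α × α) // V ∈ @uniformity _ v}) (fun _ p => g p) k
  exact ⟨fun k => (F' k).1, rfl, fun k => (F' k).2, fun k => hg (F' k)⟩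

end aux

/-- For a sequence of pointed uniform spaces `(X_i, *_i)`, the identity map from the small
box-product `⊡_{i} X_i` to the uniform direct limit `u-lim ⊡_{i ≤ n} X_i` of the tower of
finite sub-products is a homeomorphism: the two topologies on `⊡_i X_i` coincide.  Here
`ubox` is the box uniformity on `∏_i X_i`, with basic entourages
`{((x_i),(y_i)) : ∀ i, (x_i,y_i) ∈ U_i}` for sequences of entourages `U_i` of `X_i`. -/

theorem statement15 (X : ℕ → Type u) (u : (i : ℕ) → UniformSpace (X i))
    (pt : (i : ℕ) → X i)
    (ubox : UniformSpace ((i : ℕ) → X i))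
    (hbox : (@uniformity _ ubox).HasBasis
      (fun U : (i : ℕ) → Set (X i × X i) => ∀ i, U i ∈ @uniformity _ (u i))
      (fun U => {p : ((i : ℕ) → X i) × ((i : ℕ) → X i) | ∀ i, (p.1 i, p.2 i) ∈ U i})) :
    (sInf {w : UniformSpace (SmallBox X pt) |
        ∀ n, @UniformContinuous _ _ (boxStageUniformity X pt ubox n) w
          (Subtype.val : boxStage X pt n → SmallBox X pt)}).toTopologicalSpace =
      (smallBoxUniformity X pt ubox).toTopologicalSpace := by
  classical
  set 𝒰 : UniformSpace (SmallBox X pt) := smallBoxUniformity X pt ubox with h𝒰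
  set W : Set (UniformSpace (SmallBox X pt)) :=
    {w | ∀ n, @UniformContinuous _ _ (boxStageUniformity X pt ubox n) w
        (Subtype.val : boxStage X pt n → SmallBox X pt)} with hWdef
  have hUW : 𝒰 ∈ W := by
    intro n
    exact @uniformContinuous_comap _ _ _ 𝒰
  set 𝒱 : UniformSpace (SmallBox X pt) := sInf W with h𝒱
  -- easy direction
  refine le_antisymm (UniformSpace.toTopologicalSpace_mono (sInf_le hUW)) ?_
  -- uniform continuity of the stage inclusions into the direct limit
  have hUC : ∀ n, @UniformContinuous _ _ (boxStageUniformity X pt ubox n) 𝒱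
      (Subtype.val : boxStage X pt n → SmallBox X pt) := by
    intro n
    rw [h𝒱, uniformContinuous_sInf_rng]
    exact fun w hw => hw n
  -- hard direction: every 𝒱-open set is 𝒰-open
  rw [TopologicalSpace.le_def]
  intro s hs
  rw [@isOpen_iff_ball_subset _ 𝒰]
  intro x hx
  obtain ⟨E, hE, hEs⟩ := (@isOpen_iff_ball_subset _ 𝒱 s).mp hs x hx
  obtain ⟨F, hF0, hFmem, hFcomp⟩ := exists_entourage_seq 𝒱 hE
  -- F is antitone
  have hFsucc : ∀ k, F (k + 1) ⊆ F k := by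
    intro k p hp
    exact hFcomp k ⟨p.1, @refl_mem_uniformity _ 𝒱 _ _ (hFmem (k + 1)), hp⟩
  have hFanti : ∀ k j, k ≤ j → F j ⊆ F k := by
    intro k j h
    induction h with
    | refl => exact subset_rfl
    | step _ ih => exact fun _ hp => ih (hFsucc _ hp)
  -- extract box entourages from uniform continuity of the stage inclusions
  have claim : ∀ n : ℕ, ∃ U : (i : ℕ) → Set (X i × X i),
      (∀ i, U i ∈ @uniformity _ (u i)) ∧
      ∀ f g : SmallBox X pt, f ∈ boxStage X pt n → g ∈ boxStage X pt n →
        (∀ i, (f.1 i, g.1 i) ∈ U i) → (f, g) ∈ F (n + 1) := by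
    intro n
    have h1 : (fun p : boxStage X pt n × boxStage X pt n =>
        ((p.1 : SmallBox X pt), (p.2 : SmallBox X pt))) ⁻¹' F (n + 1)
        ∈ @uniformity _ (boxStageUniformity X pt ubox n) :=
      Filter.mem_map.mp (hUC n (hFmem (n + 1)))
    let v1 : SmallBox X pt → (i : ℕ) → X i := Subtype.val
    let v2 : boxStage X pt n → SmallBox X pt := Subtype.val
    have hbasis := (hbox.comap (Prod.map v1 v1)).comap (Prod.map v2 v2)
    obtain ⟨U, hU, hUsub⟩ := hbasis.mem_iff.mp h1
    refine ⟨U, hU, fun f g hf hg hc => ?_⟩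
    exact hUsub (show ((⟨f, hf⟩, ⟨g, hg⟩) : boxStage X pt n × boxStage X pt n) ∈ _ from hc)
  choose U hU1 hU2 using claim
  -- a bound for the support of x
  obtain ⟨m, hm⟩ := x.2.bddAbove
  have hxm : ∀ i, m < i → x.1 i = pt i := by
    intro i hi
    by_contra h
    exact absurd (hm h) (not_le.mpr hi)
  -- the box entourage
  set V : (i : ℕ) → Set (X i × X i) :=
    fun i => ⋂ n ∈ Finset.range (max i m + 1), U n i with hVdef
  have hV : ∀ i, V i ∈ @uniformity _ (u i) :=
    fun i => (Filter.biInter_finset_mem _).mpr fun n _ => hU1 n i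
  have hVsub : ∀ i n, n ≤ max i m → V i ⊆ U n i := fun i n hn =>
    Set.biInter_subset_of_mem (Finset.mem_range.mpr (Nat.lt_succ_of_le hn))
  refine ⟨Prod.map (Subtype.val : SmallBox X pt → (i : ℕ) → X i) Subtype.val ⁻¹'
      {p | ∀ i, (p.1 i, p.2 i) ∈ V i}, Filter.preimage_mem_comap (hbox.mem_of_mem hV), ?_⟩
  intro y hy
  apply hEs
  have hy' : ∀ i, (x.1 i, y.1 i) ∈ V i := hy
  -- a bound for the support of y
  obtain ⟨N, hN⟩ := y.2.bddAbove
  have hyN : ∀ i, N < i → y.1 i = pt i := by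
    intro i hi
    by_contra h
    exact absurd (hN h) (not_le.mpr hi)
  -- the chain of points from x to y
  set z : ℕ → SmallBox X pt := fun k =>
    ⟨fun i => if i < k then y.1 i else x.1 i, by
      apply (x.2.union y.2).subset
      intro i hi
      simp only [Set.mem_setOf_eq] at hi
      by_cases h : i < k
      · rw [if_pos h] at hi
        exact Or.inr hi
      · rw [if_neg h] at hi
        exact Or.inl hi⟩ with hzdef
  have hz0 : z 0 = x := by
    refine Subtype.ext (funext fun i => ?_)
    show (if i < 0 then y.1 i else x.1 i) = x.1 i
    rw [if_neg (Nat.not_lt_zero i)]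
  set K : ℕ := max m N + 1 with hKdef
  have hzK : z K = y := by
    refine Subtype.ext (funext fun i => ?_)
    show (if i < K then y.1 i else x.1 i) = y.1 i
    by_cases h : i < K
    · rw [if_pos h]
    · rw [if_neg h, hxm i (by omega), hyN i (by omega)]
  have hstep : ∀ k, (z k, z (k + 1)) ∈ F (k + 1) := by
    intro k
    have h1 : z k ∈ boxStage X pt (max k m) := by
      intro i hi
      show (if i < k then y.1 i else x.1 i) = pt i
      rw [if_neg (by omega)]
      exact hxm i (by omega)
    have h2 : z (k + 1) ∈ boxStage X pt (max k m) := by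
      intro i hi
      show (if i < k + 1 then y.1 i else x.1 i) = pt i
      rw [if_neg (by omega)]
      exact hxm i (by omega)
    have h3 : ∀ i, ((z k).1 i, (z (k + 1)).1 i) ∈ U (max k m) i := by
      intro i
      by_cases h : i = k
      · subst h
        show ((if i < i then y.1 i else x.1 i), (if i < i + 1 then y.1 i else x.1 i))
            ∈ U (max i m) i
        rw [if_neg (lt_irrefl i), if_pos (Nat.lt_succ_self i)]
        exact hVsub i (max i m) le_rfl (hy' i)
      · have heq : (z k).1 i = (z (k + 1)).1 i := by
          show (if i < k then y.1 i else x.1 i) = (if i < k + 1 then y.1 i else x.1 i)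
          by_cases h' : i < k
          · rw [if_pos h', if_pos (by omega)]
          · rw [if_neg h', if_neg (by omega)]
        rw [heq]
        exact refl_mem_uniformity (hU1 (max k m) i)
    exact hFanti (k + 1) (max k m + 1) (by omega) (hU2 (max k m) (z k) (z (k + 1)) h1 h2 h3)
  have hchain : ∀ M j, (z j, z (j + M)) ∈ F j := by
    intro M
    induction M with
    | zero => exact fun j => @refl_mem_uniformity _ 𝒱 _ _ (hFmem j)
    | succ M ih =>
      intro j
      have heq : j + (M + 1) = (j + 1) + M := by omega
      rw [heq]
      exact hFcomp j ⟨z (j + 1), hstep j, ih (j + 1)⟩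
  have hfin := hchain K 0
  rw [Nat.zero_add, hz0, hzK, hF0] at hfin
  exact hfin
end
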